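/- arXiv:2601.02866 — 4 statements merged into one kernel-verified Lean document; each statement's English description precedes it below -/
import Mathlib

section
/- For every x > 0 and y ∈ ℝ, the integral over τ ∈ (0,∞) of cos(τy)·K_{iτ}(x) dτ equals (π/2)·exp(−x·cosh y), where K_{iτ} denotes the modified Bessel function of the second kind of purely imaginary order iτ. -/
open MeasureTheory Real
open FourierTransform Set

lemma one_add_sq_div_four_le_cosh (t : ℝ) : 1 + t^2/4 ≤ Real.cosh t := by
  rw [← Real.cosh_abs]
  have h1 : 1 + |t| + t^2/2 ≤ Real.exp |t| := by
    have := Real.sum_le_exp_of_nonneg (abs_nonneg t) 3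
    simp [Finset.sum_range_succ, Nat.factorial] at this
    nlinarith [this, sq_abs t]
  have h2 : 1 - |t| ≤ Real.exp (-|t|) := by
    nlinarith [Real.add_one_le_exp (-|t|)]
  rw [Real.cosh_eq]
  nlinarith [sq_abs t]

lemma abs_sinh_le_exp_abs (t : ℝ) : |Real.sinh t| ≤ Real.exp |t| := by
  rw [Real.sinh_eq]
  rw [abs_le]
  have e1 : Real.exp t ≤ Real.exp |t| := Real.exp_le_exp.2 (le_abs_self t)
  have e2 : Real.exp (-t) ≤ Real.exp |t| := Real.exp_le_exp.2 (neg_le_abs t)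
  have e3 : 0 < Real.exp t := Real.exp_pos t
  have e4 : 0 < Real.exp (-t) := Real.exp_pos (-t)
  constructor <;> nlinarith

lemma cosh_le_exp_abs (t : ℝ) : Real.cosh t ≤ Real.exp |t| := by
  rw [Real.cosh_eq]
  have e1 : Real.exp t ≤ Real.exp |t| := Real.exp_le_exp.2 (le_abs_self t)
  have e2 : Real.exp (-t) ≤ Real.exp |t| := Real.exp_le_exp.2 (neg_le_abs t)
  linarith

lemma master_integrable {x : ℝ} (hx : 0 < x) (a : ℝ) :
    Integrable (fun t : ℝ => Real.exp (a * |t|) * Real.exp (-x * Real.cosh t)) := by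
  have hmeas : AEStronglyMeasurable (fun t : ℝ => Real.exp (a * |t|) * Real.exp (-x * Real.cosh t)) volume := by
    exact ((Real.continuous_exp.comp (continuous_const.mul continuous_abs)).mul
      (Real.continuous_exp.comp (continuous_const.mul Real.continuous_cosh))).aestronglyMeasurable
  apply Integrable.mono' (((integrable_exp_neg_mul_sq (by positivity : (0:ℝ) < x/8)).const_mul
    (Real.exp (2*a^2/x - x)))) hmeas
  filter_upwards with t
  rw [norm_of_nonneg (by positivity), ← Real.exp_add, ← Real.exp_add]
  apply Real.exp_le_exp.2
  have h1 : 1 + t^2/4 ≤ Real.cosh t := one_add_sq_div_four_le_cosh t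
  have h2 : a * |t| ≤ x/8 * t^2 + 2*a^2/x := by
    rw [← sub_nonneg, ← sq_abs t]
    have heq : x/8 * |t|^2 + 2*a^2/x - a * |t| = (x*|t| - 4*a)^2/(8*x) := by
      field_simp
      ring
    rw [heq]
    positivity
  nlinarith [sq_abs t]

lemma hasDerivAt_g (x t : ℝ) :
    HasDerivAt (fun t => Real.exp (-x * Real.cosh t))
      (-x * Real.sinh t * Real.exp (-x * Real.cosh t)) t := by
  have h := ((Real.hasDerivAt_cosh t).const_mul (-x)).exp
  convert h using 1
  ring

lemma hasDerivAt_g1 (x t : ℝ) :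
    HasDerivAt (fun t => -x * Real.sinh t * Real.exp (-x * Real.cosh t))
      ((x^2 * Real.sinh t^2 - x * Real.cosh t) * Real.exp (-x * Real.cosh t)) t := by
  have h1 : HasDerivAt (fun t => -x * Real.sinh t) (-x * Real.cosh t) t :=
    (Real.hasDerivAt_sinh t).const_mul (-x)
  have h2 := hasDerivAt_g x t
  exact (h1.mul h2).congr_deriv (by ring)

lemma Ig {x : ℝ} (hx : 0 < x) : Integrable (fun t : ℝ => Real.exp (-x * Real.cosh t)) := by
  simpa using master_integrable hx 0

lemma Ig1 {x : ℝ} (hx : 0 < x) :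
    Integrable (fun t : ℝ => -x * Real.sinh t * Real.exp (-x * Real.cosh t)) := by
  apply Integrable.mono' ((master_integrable hx 1).const_mul x)
  · exact ((continuous_const.mul Real.continuous_sinh).mul
      (Real.continuous_exp.comp (continuous_const.mul Real.continuous_cosh))).aestronglyMeasurable
  filter_upwards with t
  have h1 : |Real.sinh t| ≤ Real.exp |t| := abs_sinh_le_exp_abs t
  have h2 : (0:ℝ) < Real.exp (-x * Real.cosh t) := Real.exp_pos _
  rw [norm_mul, norm_mul, Real.norm_eq_abs, Real.norm_eq_abs, Real.norm_eq_abs,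
    abs_of_pos h2, abs_neg, abs_of_pos hx, one_mul]
  calc x * |Real.sinh t| * Real.exp (-x * Real.cosh t)
      ≤ x * Real.exp |t| * Real.exp (-x * Real.cosh t) := by gcongr
    _ = x * (Real.exp |t| * Real.exp (-x * Real.cosh t)) := by ring

lemma Ig2 {x : ℝ} (hx : 0 < x) :
    Integrable (fun t : ℝ =>
      (x^2 * Real.sinh t^2 - x * Real.cosh t) * Real.exp (-x * Real.cosh t)) := by
  apply Integrable.mono' ((master_integrable hx 2).const_mul (x^2 + x))
  · apply Continuous.aestronglyMeasurable
    exact ((continuous_const.mul (Real.continuous_sinh.pow 2)).sub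
      (continuous_const.mul Real.continuous_cosh)).mul
      (Real.continuous_exp.comp (continuous_const.mul Real.continuous_cosh))
  filter_upwards with t
  have h1 : |Real.sinh t| ≤ Real.exp |t| := abs_sinh_le_exp_abs t
  have h1' : Real.cosh t ≤ Real.exp |t| := cosh_le_exp_abs t
  have h0 : (1:ℝ) ≤ Real.cosh t := Real.one_le_cosh t
  have hE : (1:ℝ) ≤ Real.exp |t| := by linarith
  have h2 : (0:ℝ) < Real.exp (-x * Real.cosh t) := Real.exp_pos _
  rw [norm_mul, Real.norm_eq_abs, Real.norm_eq_abs, abs_of_pos h2]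
  have hb : |x^2 * Real.sinh t^2 - x * Real.cosh t| ≤ (x^2 + x) * Real.exp (2 * |t|) := by
    have habs : |x^2 * Real.sinh t^2 - x * Real.cosh t|
        ≤ x^2 * Real.sinh t^2 + x * Real.cosh t := by
      have ha : (0:ℝ) ≤ x^2 * Real.sinh t^2 := by positivity
      have hb' : (0:ℝ) ≤ x * Real.cosh t := by positivity
      have := abs_sub (x^2 * Real.sinh t^2) (x * Real.cosh t)
      rwa [abs_of_nonneg ha, abs_of_nonneg hb'] at this
    have hE2 : Real.exp (2 * |t|) = Real.exp |t| * Real.exp |t| := by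
      rw [two_mul, Real.exp_add]
    have hs : Real.sinh t ^ 2 ≤ Real.exp |t| * Real.exp |t| := by
      nlinarith [sq_abs (Real.sinh t), abs_nonneg (Real.sinh t)]
    have k1 : x^2 * Real.sinh t^2 ≤ x^2 * (Real.exp |t| * Real.exp |t|) :=
      mul_le_mul_of_nonneg_left hs (sq_nonneg x)
    have k2 : x * Real.cosh t ≤ x * (Real.exp |t| * Real.exp |t|) := by
      apply mul_le_mul_of_nonneg_left _ hx.le
      nlinarith
    calc |x^2 * Real.sinh t^2 - x * Real.cosh t|
        ≤ x^2 * Real.sinh t^2 + x * Real.cosh t := habs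
      _ ≤ (x^2 + x) * Real.exp (2*|t|) := by rw [hE2]; nlinarith
  calc |x^2 * Real.sinh t^2 - x * Real.cosh t| * Real.exp (-x * Real.cosh t)
      ≤ ((x^2 + x) * Real.exp (2 * |t|)) * Real.exp (-x * Real.cosh t) := by gcongr
    _ = (x^2 + x) * (Real.exp (2 * |t|) * Real.exp (-x * Real.cosh t)) := by ring

lemma integral_comp_neg_real (h : ℝ → ℝ) : ∫ t : ℝ, h (-t) = ∫ t, h t :=
  (Measure.measurePreserving_neg volume).integral_comp
    (Homeomorph.neg ℝ).measurableEmbedding h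

lemma integral_odd {h : ℝ → ℝ} (hodd : ∀ t, h (-t) = -h t) : ∫ t, h t = 0 := by
  have h1 := integral_comp_neg_real h
  simp_rw [hodd] at h1
  rw [integral_neg] at h1
  linarith

lemma integral_even_eq {h : ℝ → ℝ} (heven : ∀ t, h (-t) = h t) :
    ∫ t, h t = 2 * ∫ t in Ioi (0:ℝ), h t := by
  have habs : ∀ t : ℝ, h |t| = h t := by
    intro t
    rcases abs_cases t with ⟨h1, _⟩ | ⟨h1, _⟩
    · rw [h1]
    · rw [h1, heven]
  rw [← integral_comp_abs (f := h)]
  exact integral_congr_ae (Filter.Eventually.of_forall fun t => (habs t).symm)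

lemma fourier_decomp (φ F : ℝ → ℝ) (hφ : Continuous φ) (hF : AEStronglyMeasurable F volume)
    (hFi : Integrable F) :
    ∫ t : ℝ, Complex.exp ((φ t : ℂ) * Complex.I) • ((F t : ℝ) : ℂ)
      = ((∫ t, Real.cos (φ t) * F t : ℝ) : ℂ)
        + ((∫ t, Real.sin (φ t) * F t : ℝ) : ℂ) * Complex.I := by
  have key : ∀ t : ℝ, Complex.exp ((φ t : ℂ) * Complex.I) • ((F t : ℝ) : ℂ)
      = ((Real.cos (φ t) * F t : ℝ) : ℂ) + ((Real.sin (φ t) * F t : ℝ) : ℂ) * Complex.I := by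
    intro t
    rw [smul_eq_mul, Complex.exp_mul_I]
    push_cast
    ring
  simp_rw [key]
  have i1 : Integrable (fun t => Real.cos (φ t) * F t) := by
    apply Integrable.mono' hFi.norm
      (((Real.continuous_cos.comp hφ).aestronglyMeasurable).mul hF)
    filter_upwards with t
    simp only [Pi.mul_apply, Function.comp_apply, norm_mul]
    exact mul_le_of_le_one_left (norm_nonneg _)
      (by rw [Real.norm_eq_abs]; exact Real.abs_cos_le_one _)
  have i2 : Integrable (fun t => Real.sin (φ t) * F t) := by
    apply Integrable.mono' hFi.norm
      (((Real.continuous_sin.comp hφ).aestronglyMeasurable).mul hF)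
    filter_upwards with t
    simp only [Pi.mul_apply, Function.comp_apply, norm_mul]
    exact mul_le_of_le_one_left (norm_nonneg _)
      (by rw [Real.norm_eq_abs]; exact Real.abs_sin_le_one _)
  calc ∫ t : ℝ, (((Real.cos (φ t) * F t : ℝ) : ℂ) + ((Real.sin (φ t) * F t : ℝ) : ℂ) * Complex.I)
      = (∫ t : ℝ, ((Real.cos (φ t) * F t : ℝ) : ℂ))
        + ∫ t : ℝ, ((Real.sin (φ t) * F t : ℝ) : ℂ) * Complex.I :=
        integral_add i1.ofReal (i2.ofReal.mul_const Complex.I)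
    _ = ((∫ t, Real.cos (φ t) * F t : ℝ) : ℂ)
        + ((∫ t, Real.sin (φ t) * F t : ℝ) : ℂ) * Complex.I := by
        rw [integral_mul_const, integral_complex_ofReal, integral_complex_ofReal]

/-- Macdonald function of purely imaginary order `iτ`:
`K_{iτ}(x) = ∫_0^∞ exp(−x cosh t) cos(τ t) dt`. -/
noncomputable def Kit (τ x : ℝ) : ℝ :=
  ∫ t in Set.Ioi (0:ℝ), Real.exp (-x * Real.cosh t) * Real.cos (τ * t)

lemma Kit_neg (τ x : ℝ) : Kit (-τ) x = Kit τ x := by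
  unfold Kit
  apply setIntegral_congr_fun measurableSet_Ioi
  intro t _
  simp [neg_mul, Real.cos_neg]

lemma fourier_formula {x : ℝ} (hx : 0 < x) (w : ℝ) :
    𝓕 (fun t : ℝ => ((Real.exp (-x * Real.cosh t) : ℝ) : ℂ)) w
      = ((2 * Kit (2*π*w) x : ℝ) : ℂ) := by
  rw [Real.fourier_real_eq_integral_exp_smul]
  rw [fourier_decomp (fun v => -2*π*v*w) (fun t => Real.exp (-x * Real.cosh t))
    (by continuity)
    ((Real.continuous_exp.comp (continuous_const.mul Real.continuous_cosh)).aestronglyMeasurable)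
    (Ig hx)]
  have hsin : (∫ t : ℝ, Real.sin (-2*π*t*w) * Real.exp (-x * Real.cosh t)) = 0 := by
    apply integral_odd
    intro t
    show Real.sin (-2*π*(-t)*w) * Real.exp (-x * Real.cosh (-t))
      = -(Real.sin (-2*π*t*w) * Real.exp (-x * Real.cosh t))
    rw [show -2*π*(-t)*w = -(-2*π*t*w) by ring, Real.sin_neg, Real.cosh_neg]
    ring
  have hcos : (∫ t : ℝ, Real.cos (-2*π*t*w) * Real.exp (-x * Real.cosh t))
      = 2 * Kit (2*π*w) x := by
    rw [integral_even_eq (h := fun t => Real.cos (-2*π*t*w) * Real.exp (-x * Real.cosh t))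
      (by intro t
          show Real.cos (-2*π*(-t)*w) * Real.exp (-x * Real.cosh (-t))
            = Real.cos (-2*π*t*w) * Real.exp (-x * Real.cosh t)
          rw [show -2*π*(-t)*w = -(-2*π*t*w) by ring, Real.cos_neg, Real.cosh_neg])]
    unfold Kit
    congr 1
    apply setIntegral_congr_fun measurableSet_Ioi
    intro t _
    show Real.cos (-2*π*t*w) * Real.exp (-x * Real.cosh t)
      = Real.exp (-x * Real.cosh t) * Real.cos (2*π*w*t)
    rw [show -2*π*t*w = -(2*π*w*t) by ring, Real.cos_neg, mul_comm]
  rw [hsin, hcos]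
  simp

lemma continuous_fourier {x : ℝ} (hx : 0 < x) :
    Continuous (𝓕 (fun t : ℝ => ((Real.exp (-x * Real.cosh t) : ℝ) : ℂ))) :=
  VectorFourier.fourierIntegral_continuous Real.continuous_fourierChar
    (by exact continuous_inner (𝕜 := ℝ) (E := ℝ)) ((Ig hx).ofReal)

lemma integrable_fourier {x : ℝ} (hx : 0 < x) :
    Integrable (𝓕 (fun t : ℝ => ((Real.exp (-x * Real.cosh t) : ℝ) : ℂ))) := by
  set f : ℝ → ℂ := fun t => ((Real.exp (-x * Real.cosh t) : ℝ) : ℂ) with hfdef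
  have hd1 : ∀ t : ℝ, HasDerivAt f ((-x * Real.sinh t * Real.exp (-x * Real.cosh t) : ℝ) : ℂ) t :=
    fun t => (hasDerivAt_g x t).ofReal_comp
  have hderiv : deriv f = fun t : ℝ => ((-x * Real.sinh t * Real.exp (-x * Real.cosh t) : ℝ) : ℂ) :=
    funext fun t => (hd1 t).deriv
  have hdiff : Differentiable ℝ f := fun t => (hd1 t).differentiableAt
  have hd2 : ∀ t : ℝ, HasDerivAt
      (fun t : ℝ => ((-x * Real.sinh t * Real.exp (-x * Real.cosh t) : ℝ) : ℂ))
      (((x^2 * Real.sinh t^2 - x * Real.cosh t) * Real.exp (-x * Real.cosh t) : ℝ) : ℂ) t :=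
    fun t => (hasDerivAt_g1 x t).ofReal_comp
  have hdiff2 : Differentiable ℝ (deriv f) := by
    rw [hderiv]; exact fun t => (hd2 t).differentiableAt
  have hderiv2 : deriv (deriv f)
      = fun t : ℝ => (((x^2 * Real.sinh t^2 - x * Real.cosh t)
          * Real.exp (-x * Real.cosh t) : ℝ) : ℂ) := by
    rw [hderiv]; exact funext fun t => (hd2 t).deriv
  have If : Integrable f := (Ig hx).ofReal
  have Idf : Integrable (deriv f) := by rw [hderiv]; exact (Ig1 hx).ofReal
  have Iddf : Integrable (deriv (deriv f)) := by rw [hderiv2]; exact (Ig2 hx).ofReal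
  have hF1 := Real.fourier_deriv If hdiff Idf
  have hF2 := Real.fourier_deriv Idf hdiff2 Iddf
  set C := ∫ t : ℝ, ‖deriv (deriv f) t‖ with hCdef
  have hkey : ∀ w : ℝ, (2*π*|w|)^2 * ‖𝓕 f w‖ ≤ C := by
    intro w
    have h1 : ‖𝓕 (deriv (deriv f)) w‖ ≤ C := by
      exact VectorFourier.norm_fourierIntegral_le_integral_norm _ _ _ _ _
    rw [hF2] at h1
    rw [hF1] at h1
    rw [norm_smul, norm_smul] at h1
    have hnn : ‖(2*↑π*Complex.I*(w:ℂ) : ℂ)‖ = 2*π*|w| := by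
      simp [norm_mul, Complex.norm_real, abs_of_nonneg Real.pi_nonneg]
    rw [hnn] at h1
    nlinarith [norm_nonneg (𝓕 f w), abs_nonneg w, Real.pi_nonneg]
  have hcont : Continuous (𝓕 f) := continuous_fourier hx
  obtain ⟨C1, hC1⟩ := (isCompact_Icc (a := (-1:ℝ)) (b := 1)).exists_bound_of_continuousOn
    hcont.continuousOn
  have hC1nn : 0 ≤ C1 := le_trans (norm_nonneg (𝓕 f 0)) (hC1 0 (by norm_num))
  set M := max (2*C1) (C/(2*π^2)) with hMdef
  have hM0 : 0 ≤ M := le_trans (by linarith) (le_max_left _ _)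
  have hbound : ∀ w : ℝ, ‖𝓕 f w‖ ≤ M * (1 + w^2)⁻¹ := by
    intro w
    rw [← div_eq_mul_inv, le_div_iff₀ (by positivity)]
    by_cases hw : |w| ≤ 1
    · have hmem := hC1 w (abs_le.1 hw)
      have h2 : 1 + w^2 ≤ 2 := by nlinarith [sq_abs w, abs_nonneg w]
      have h3 : 2*C1 ≤ M := le_max_left _ _
      nlinarith [norm_nonneg (𝓕 f w)]
    · push_neg at hw
      have hπ := Real.pi_pos
      have hsq : 1 ≤ w^2 := by nlinarith [sq_abs w, abs_nonneg w]
      have hM2 : C/(2*π^2) ≤ M := le_max_right _ _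
      have hC2 : C ≤ 2*π^2 * M := by
        rw [div_le_iff₀ (by positivity)] at hM2; linarith
      have h3 : 2*π^2 * (2*(w^2*‖𝓕 f w‖)) ≤ 2*π^2 * M := by
        calc 2*π^2 * (2*(w^2*‖𝓕 f w‖)) = (2*π*|w|)^2 * ‖𝓕 f w‖ := by
              rw [mul_pow, mul_pow, sq_abs]; ring
          _ ≤ C := hkey w
          _ ≤ 2*π^2 * M := hC2
      have h4 : 2*(w^2*‖𝓕 f w‖) ≤ M := le_of_mul_le_mul_left h3 (by positivity)
      nlinarith [norm_nonneg (𝓕 f w)]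
  apply Integrable.mono' (integrable_inv_one_add_sq.const_mul M)
    hcont.aestronglyMeasurable
  filter_upwards with w
  exact hbound w

theorem integral_cos_Kit (x y : ℝ) (hx : 0 < x) :
    ∫ τ in Set.Ioi (0:ℝ), Real.cos (τ * y) * Kit τ x
      = (Real.pi / 2) * Real.exp (-x * Real.cosh y) := by
  set f : ℝ → ℂ := fun t => ((Real.exp (-x * Real.cosh t) : ℝ) : ℂ) with hfdef
  have If : Integrable f := (Ig hx).ofReal
  have hfc : Continuous f := Complex.continuous_ofReal.comp
    (Real.continuous_exp.comp (continuous_const.mul Real.continuous_cosh))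
  have hinv := If.fourierInv_fourier_eq (integrable_fourier hx) (hfc.continuousAt (x := y))
  rw [Real.fourierInv_eq_fourier_neg] at hinv
  rw [Real.fourier_real_eq_integral_exp_smul] at hinv
  have hFre : ∀ ξ : ℝ, 𝓕 f ξ = ((2 * Kit (2*π*ξ) x : ℝ) : ℂ) := fourier_formula hx
  simp_rw [hFre] at hinv
  have hFeq : (fun ξ : ℝ => 2 * Kit (2*π*ξ) x) = fun ξ => (𝓕 f ξ).re := by
    funext ξ; rw [hFre ξ, Complex.ofReal_re]
  have hFmeas : AEStronglyMeasurable (fun ξ : ℝ => 2 * Kit (2*π*ξ) x) volume := by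
    rw [hFeq]; exact (Complex.continuous_re.comp (continuous_fourier hx)).aestronglyMeasurable
  have hFint : Integrable (fun ξ : ℝ => 2 * Kit (2*π*ξ) x) := by
    rw [hFeq]; exact (integrable_fourier hx).re
  rw [fourier_decomp (fun v => -2*π*v*(-y)) (fun ξ => 2 * Kit (2*π*ξ) x)
    (by continuity) hFmeas hFint] at hinv
  have hsin : (∫ ξ : ℝ, Real.sin (-2*π*ξ*(-y)) * (2 * Kit (2*π*ξ) x)) = 0 := by
    apply integral_odd
    intro ξ
    show Real.sin (-2*π*(-ξ)*(-y)) * (2 * Kit (2*π*(-ξ)) x)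
      = -(Real.sin (-2*π*ξ*(-y)) * (2 * Kit (2*π*ξ) x))
    rw [show 2*π*(-ξ) = -(2*π*ξ) by ring, Kit_neg,
      show -2*π*(-ξ)*(-y) = -(-2*π*ξ*(-y)) by ring, Real.sin_neg]
    ring
  rw [hsin] at hinv
  have hreal : (∫ ξ : ℝ, Real.cos (-2*π*ξ*(-y)) * (2 * Kit (2*π*ξ) x))
      = Real.exp (-x * Real.cosh y) := by
    have h2 : ((∫ ξ : ℝ, Real.cos (-2*π*ξ*(-y)) * (2 * Kit (2*π*ξ) x) : ℝ) : ℂ)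
        = ((Real.exp (-x * Real.cosh y) : ℝ) : ℂ) := by
      simpa [hfdef] using hinv
    exact_mod_cast h2
  have heven : (∫ ξ : ℝ, Real.cos (-2*π*ξ*(-y)) * (2 * Kit (2*π*ξ) x))
      = 2 * ∫ ξ in Ioi (0:ℝ), Real.cos (-2*π*ξ*(-y)) * (2 * Kit (2*π*ξ) x) := by
    apply integral_even_eq
    intro ξ
    show Real.cos (-2*π*(-ξ)*(-y)) * (2 * Kit (2*π*(-ξ)) x)
      = Real.cos (-2*π*ξ*(-y)) * (2 * Kit (2*π*ξ) x)
    rw [show 2*π*(-ξ) = -(2*π*ξ) by ring, Kit_neg,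
      show -2*π*(-ξ)*(-y) = -(-2*π*ξ*(-y)) by ring, Real.cos_neg]
  have hcv : (∫ ξ in Ioi (0:ℝ), Real.cos (-2*π*ξ*(-y)) * (2 * Kit (2*π*ξ) x))
      = (2*π)⁻¹ * ∫ τ in Ioi (0:ℝ), 2 * (Real.cos (τ*y) * Kit τ x) := by
    have h1 : ∀ ξ : ℝ, Real.cos (-2*π*ξ*(-y)) * (2 * Kit (2*π*ξ) x)
        = (fun τ => 2 * (Real.cos (τ*y) * Kit τ x)) (2*π*ξ) := by
      intro ξ
      show Real.cos (-2*π*ξ*(-y)) * (2 * Kit (2*π*ξ) x)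
        = 2 * (Real.cos ((2*π*ξ)*y) * Kit (2*π*ξ) x)
      rw [show -2*π*ξ*(-y) = 2*π*ξ*y by ring]
      ring
    simp_rw [h1]
    rw [integral_comp_mul_left_Ioi (fun τ => 2 * (Real.cos (τ*y) * Kit τ x)) 0 Real.two_pi_pos]
    rw [mul_zero]
    simp [smul_eq_mul]
  rw [heven, hcv, integral_const_mul] at hreal
  have hπ := Real.pi_pos
  have hπ' : (π : ℝ) ≠ 0 := ne_of_gt hπ
  field_simp at hreal ⊢
  simp only [mul_comm y] at ⊢
  linarith
end

section
/- With p_n(x) = (−1)^n e^x A^n(e^{−x}), where (A f)(x) = x²f(x) − x·(x f′(x))′, the leading coefficient of the degree-n polynomial p_n is (−1)^n·(2n−1)!! (double factorial), i.e. p_n(x) = (−1)^n (2n−1)!!·x^n + lower order terms. -/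
open Real

/-- The operator `(A f)(x) = x² f(x) − x (x f′(x))′`. -/
noncomputable def opA (f : ℝ → ℝ) : ℝ → ℝ :=
  fun x => x^2 * f x - x * deriv (fun y => y * deriv f y) x

/-- `p_n(x) = (−1)^n e^x (Aⁿ e^{−x})(x)`. -/
noncomputable def p (n : ℕ) (x : ℝ) : ℝ :=
  (-1:ℝ)^n * Real.exp x * (opA^[n] (fun y => Real.exp (-y))) x

open Polynomial
noncomputable def T (P : Polynomial ℝ) : Polynomial ℝ :=
  X * P + C 2 * (X^2 * P.derivative) - X * P.derivative - X^2 * P.derivative.derivative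

lemma deriv_poly_exp (Q : Polynomial ℝ) (x : ℝ) :
    deriv (fun y => Q.eval y * Real.exp (-y)) x
      = (Q.derivative.eval x - Q.eval x) * Real.exp (-x) := by
  have h1 : HasDerivAt (fun y : ℝ => Q.eval y) (Q.derivative.eval x) x := Q.hasDerivAt x
  have h2 : HasDerivAt (fun y : ℝ => Real.exp (-y)) (-Real.exp (-x)) x := by
    simpa [Function.comp_def] using (Real.hasDerivAt_exp (-x)).comp x ((hasDerivAt_id x).neg)
  rw [show (fun y => Q.eval y * Real.exp (-y)) = (fun y : ℝ => Q.eval y) * (fun y => Real.exp (-y)) from rfl,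
    (h1.mul h2).deriv]; ring

lemma opA_poly (P : Polynomial ℝ) (x : ℝ) :
    opA (fun y => P.eval y * Real.exp (-y)) x = (T P).eval x * Real.exp (-x) := by
  unfold opA
  have hf : deriv (fun y => P.eval y * Real.exp (-y))
      = fun y => (P.derivative - P).eval y * Real.exp (-y) := by
    funext y; rw [deriv_poly_exp]; simp
  rw [hf]
  have hg : (fun y : ℝ => y * ((P.derivative - P).eval y * Real.exp (-y)))
      = fun y => (X * (P.derivative - P)).eval y * Real.exp (-y) := by
    funext y; simp [mul_assoc]
  rw [hg, deriv_poly_exp]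
  simp only [T, derivative_mul, derivative_X, derivative_sub, eval_add, eval_sub, eval_mul,
    eval_X, eval_pow, eval_C, one_mul]
  ring

lemma iterate_opA (n : ℕ) :
    opA^[n] (fun y => Real.exp (-y)) = fun x => (T^[n] 1).eval x * Real.exp (-x) := by
  induction n with
  | zero => simp
  | succ n ih =>
    rw [Function.iterate_succ_apply', ih, Function.iterate_succ_apply']
    funext x; exact opA_poly _ x

lemma T_add (P Q : Polynomial ℝ) : T (P + Q) = T P + T Q := by
  simp only [T, derivative_add]; ring

lemma T_C_mul (c : ℝ) (P : Polynomial ℝ) : T (C c * P) = C c * T P := by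
  simp only [T, derivative_mul, derivative_C, zero_mul, zero_add]; ring

lemma T_X_pow (n : ℕ) :
    T (X ^ n : Polynomial ℝ) = C (2*(n:ℝ)+1) * X^(n+1) - C ((n:ℝ)^2) * X^n := by
  match n with
  | 0 => simp [T]
  | 1 => simp [T]; ring
  | (m+2) =>
    simp only [T, derivative_X_pow]
    push_cast
    rw [derivative_mul, derivative_C, derivative_X_pow]
    push_cast
    simp only [map_add, map_mul, map_pow, map_ofNat, Polynomial.C_1, zero_mul, zero_add]
    ring

lemma degree_T_lt {r : Polynomial ℝ} {n : ℕ} (h : r.degree < (n : WithBot ℕ)) :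
    (T r).degree < ((n + 1 : ℕ) : WithBot ℕ) := by
  rw [degree_lt_iff_coeff_zero] at h ⊢
  intro m hm
  match n with
  | 0 =>
    have hr : r = 0 := by
      ext k; exact h k (by exact_mod_cast Nat.zero_le k)
    simp [T, hr]
  | (n+1) =>
    have hm' : n + 2 ≤ m := by exact_mod_cast hm
    obtain ⟨k, rfl⟩ : ∃ k, m = k + 2 := ⟨m - 2, by omega⟩
    have hk1 : r.coeff (k+1) = 0 := by
      apply h; exact_mod_cast by omega
    have hk2 : r.coeff (k+2) = 0 := by
      apply h; exact_mod_cast by omega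
    have hd1 : r.derivative.coeff k = 0 := by
      rw [coeff_derivative, hk1, zero_mul]
    have hd2 : r.derivative.coeff (k+1) = 0 := by
      rw [coeff_derivative, hk2, zero_mul]
    have hdd : r.derivative.derivative.coeff k = 0 := by
      rw [coeff_derivative, hd2, zero_mul]
    have e2 : ((X:Polynomial ℝ)^2 * r.derivative).coeff (k+2) = r.derivative.coeff k := by
      simpa using coeff_X_pow_mul r.derivative 2 k
    have e4 : ((X:Polynomial ℝ)^2 * r.derivative.derivative).coeff (k+2)
        = r.derivative.derivative.coeff k := by
      simpa using coeff_X_pow_mul r.derivative.derivative 2 k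
    simp only [T, coeff_sub, coeff_add, coeff_C_mul, coeff_X_mul, e2, e4,
      hk1, hd1, hd2, hdd]
    ring

lemma dfac_step (n : ℕ) :
    Nat.doubleFactorial (2*(n+1) - 1) = (2*n+1) * Nat.doubleFactorial (2*n - 1) := by
  match n with
  | 0 => rfl
  | (m+1) =>
    have h1 : 2*(m+2) - 1 = (2*m+1) + 2 := by omega
    have h2 : 2*(m+1) - 1 = 2*m+1 := by omega
    rw [h1, h2, Nat.doubleFactorial_add_two]
    ring_nf

lemma T_iter_leading (n : ℕ) :
    ∃ r : Polynomial ℝ, r.degree < (n : WithBot ℕ) ∧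
      T^[n] 1 = C ((Nat.doubleFactorial (2*n - 1) : ℝ)) * X^n + r := by
  induction n with
  | zero =>
    exact ⟨0, by simp, by simp⟩
  | succ n ih =>
    obtain ⟨r, hr, hEq⟩ := ih
    refine ⟨T r - C ((Nat.doubleFactorial (2*n-1) : ℝ) * (n:ℝ)^2) * X^n, ?_, ?_⟩
    · have h1 := degree_T_lt hr
      have h2 : (C ((Nat.doubleFactorial (2*n-1) : ℝ) * (n:ℝ)^2) * X^n).degree
          < ((n+1 : ℕ) : WithBot ℕ) := by
        apply lt_of_le_of_lt (degree_C_mul_X_pow_le _ _)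
        exact_mod_cast Nat.lt_succ_self n
      exact lt_of_le_of_lt (degree_sub_le _ _) (max_lt h1 h2)
    · rw [Function.iterate_succ_apply', hEq, T_add, T_C_mul, T_X_pow, dfac_step]
      push_cast
      simp only [map_mul, map_add, map_pow, map_one, map_ofNat]
      ring

/-- The leading coefficient of `p_n` is `(−1)^n (2n−1)!!`. -/
theorem p_leading_coeff (n : ℕ) :
    ∃ q : Polynomial ℝ, q.degree < n ∧
      ∀ x : ℝ, p n x = (-1:ℝ)^n * (Nat.doubleFactorial (2*n - 1) : ℕ) * x^n + q.eval x := by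

  obtain ⟨r, hr, hEq⟩ := T_iter_leading n
  refine ⟨((-1:ℝ)^n) • r, lt_of_le_of_lt (degree_smul_le _ _) hr, fun x => ?_⟩
  rw [p, iterate_opA]
  have hx : Real.exp x * ((T^[n] 1).eval x * Real.exp (-x)) = (T^[n] 1).eval x := by
    rw [Real.exp_neg]
    field_simp
  rw [mul_assoc, hx, hEq]
  simp only [eval_add, eval_mul, eval_C, eval_pow, eval_X, eval_smul, smul_eq_mul]
  ring
end

section
/- With p_n(x) = (−1)^n e^x A^n(e^{−x}), the recurrence p_{n+1}(x) = −x·Σ_{k=0}^{n} C(2n+1, 2k)·p_k(x) holds for every n ≥ 0, where C(m,j) denotes the binomial coefficient. -/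
open Real

namespace PSumRec

open PowerSeries Nat

noncomputable def ch : PowerSeries ℝ := (1/2 : ℝ) • (exp ℝ + evalNegHom (exp ℝ))
noncomputable def sh : PowerSeries ℝ := (1/2 : ℝ) • (exp ℝ - evalNegHom (exp ℝ))

lemma coeff_exp' (n : ℕ) : coeff n (exp ℝ) = (n ! : ℝ)⁻¹ := by
  simp [coeff_exp]

lemma coeff_expneg (n : ℕ) : coeff n (evalNegHom (exp ℝ)) = (-1)^n * (n ! : ℝ)⁻¹ := by
  simp [evalNegHom, coeff_rescale, coeff_exp']

lemma coeff_ch (n : ℕ) : coeff n ch = if Even n then (n ! : ℝ)⁻¹ else 0 := by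
  simp only [ch, map_smul, map_add, coeff_exp', coeff_expneg, smul_eq_mul]
  rcases Nat.even_or_odd n with h | h
  · simp [h.neg_one_pow, h]; ring
  · simp [h.neg_one_pow, Nat.not_even_iff_odd.mpr h]

lemma coeff_sh (n : ℕ) : coeff n sh = if Odd n then (n ! : ℝ)⁻¹ else 0 := by
  simp only [sh, map_smul, map_sub, coeff_exp', coeff_expneg, smul_eq_mul]
  rcases Nat.even_or_odd n with h | h
  · simp [h.neg_one_pow, Nat.not_odd_iff_even.mpr h]
  · simp [h.neg_one_pow, h]; ring

lemma fact_succ_inv (n : ℕ) : ((n+1)! : ℝ)⁻¹ * (n+1) = (n ! : ℝ)⁻¹ := by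
  rw [Nat.factorial_succ]
  push_cast
  rw [mul_inv]
  field_simp

lemma d_ch : d⁄dX ℝ ch = sh := by
  ext n
  rw [coeff_derivative, coeff_ch, coeff_sh]
  rcases Nat.even_or_odd n with h | h
  · simp [Nat.even_add_one, Nat.not_odd_iff_even.mpr h, h]
  · have : Even (n+1) := by simpa [Nat.even_add_one] using Nat.not_even_iff_odd.mpr h
    simp only [if_pos this, if_pos h]
    exact fact_succ_inv n

lemma d_sh : d⁄dX ℝ sh = ch := by
  ext n
  rw [coeff_derivative, coeff_sh, coeff_ch]
  rcases Nat.even_or_odd n with h | h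
  · have : Odd (n+1) := Even.add_one h
    simp only [if_pos this, if_pos h]
    exact fact_succ_inv n
  · simp [Nat.odd_add_one, Nat.not_even_iff_odd.mpr h, h]

lemma ch_sq_sub : ch * ch - sh * sh = 1 := by
  have h := exp_mul_exp_neg_eq_one (A := ℝ)
  rw [ch, sh, smul_mul_smul_comm, smul_mul_smul_comm,
    show (exp ℝ + evalNegHom (exp ℝ)) * (exp ℝ + evalNegHom (exp ℝ))
      = (exp ℝ - evalNegHom (exp ℝ)) * (exp ℝ - evalNegHom (exp ℝ))
        + 4 * (exp ℝ * evalNegHom (exp ℝ)) from by ring, h, smul_add, add_sub_cancel_left]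
  rw [mul_one, smul_eq_C_mul, show ((4:ℝ⟦X⟧)) = PowerSeries.C 4 from (map_ofNat _ 4).symm,
    ← map_mul]
  norm_num

noncomputable def G (m : ℕ) : PowerSeries ℝ := (ch - 1)^m

lemma G_succ (m : ℕ) : G (m+1) = (ch - 1) * G m := by rw [G, G, pow_succ, mul_comm]

lemma coeff_ch1 (n : ℕ) : coeff n (ch - 1) = if Even n ∧ n ≠ 0 then (n ! : ℝ)⁻¹ else 0 := by
  rw [map_sub, coeff_ch, coeff_one]
  rcases eq_or_ne n 0 with rfl | h
  · norm_num
  · simp [h]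

lemma coeff_ch1_odd {n : ℕ} (h : Odd n) : coeff n (ch - 1) = 0 := by
  simp [coeff_ch1, Nat.not_even_iff_odd.mpr h]

lemma coeff_G_odd (m : ℕ) : ∀ n : ℕ, Odd n → coeff n (G m) = 0 := by
  induction m with
  | zero => intro n hn; rw [G, pow_zero, coeff_one, if_neg hn.pos.ne']
  | succ m ih =>
    intro n hn
    rw [G_succ, coeff_mul]
    apply Finset.sum_eq_zero
    rintro ⟨i, j⟩ hij
    rw [Finset.HasAntidiagonal.mem_antidiagonal] at hij
    rcases Nat.even_or_odd i with hi | hi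
    · have hj : Odd j := by
        subst hij; rcases Nat.even_or_odd j with hj | hj
        · exact absurd (hi.add hj) (Nat.not_even_iff_odd.mpr hn)
        · exact hj
      simp [ih j hj]
    · simp [coeff_ch1_odd hi]

lemma coeff_G_lt (m : ℕ) : ∀ n : ℕ, n < 2*m → coeff n (G m) = 0 := by
  induction m with
  | zero => intro n hn; omega
  | succ m ih =>
    intro n hn
    rw [G_succ, coeff_mul]
    apply Finset.sum_eq_zero
    rintro ⟨i, j⟩ hij
    rw [Finset.HasAntidiagonal.mem_antidiagonal] at hij
    rcases Nat.lt_or_ge i 2 with hi | hi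
    · interval_cases i
      · simp [coeff_ch1]
      · simp [coeff_ch1]
    · have : j < 2*m := by omega
      simp [ih j this]

lemma d_G (m : ℕ) : d⁄dX ℝ (G m) = (m : ℝ) • (sh * G (m-1)) := by
  have h1 : d⁄dX ℝ (ch - 1) = sh := by
    rw [map_sub, d_ch]; simp
  rw [G, Derivation.leibniz_pow, h1, G, smul_eq_mul, ← Nat.cast_smul_eq_nsmul ℝ,
    smul_eq_C_mul, smul_eq_C_mul]
  ring

lemma d_shG (m : ℕ) : d⁄dX ℝ (sh * G m) =
    ((m:ℝ)+1) • G (m+1) + (2*(m:ℝ)+1) • G m := by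
  have hs : sh * sh = (ch - 1) * (ch - 1) + 2 * (ch - 1) := by
    linear_combination -ch_sq_sub
  rw [Derivation.leibniz, d_sh, d_G]
  cases m with
  | zero =>
    rw [G_succ]
    simp only [G, pow_zero, Nat.cast_zero, zero_smul, smul_zero, smul_eq_mul,
      mul_one, one_smul, zero_add, mul_zero]
    ring
  | succ k =>
    simp only [Nat.add_sub_cancel, smul_eq_mul, Nat.cast_add, Nat.cast_one]
    rw [G_succ (k+1), G_succ k]
    simp only [smul_eq_C_mul, map_add, map_one, map_mul, map_ofNat]
    linear_combination ((PowerSeries.C (k:ℝ) + 1) * G k) * hs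

lemma dd_G (m : ℕ) : d⁄dX ℝ (d⁄dX ℝ (G (m+1))) =
    (((m:ℝ)+1)*((m:ℝ)+1)) • G (m+1) + (((m:ℝ)+1)*(2*(m:ℝ)+1)) • G m := by
  rw [d_G (m+1)]
  simp only [Nat.add_sub_cancel, Nat.cast_add, Nat.cast_one]
  rw [Derivation.map_smul, d_shG, smul_add, smul_smul, smul_smul]

/-- `aa n m` = (number of partitions of a 2n-set into m blocks of even size). -/
noncomputable def aa (n m : ℕ) : ℝ := ((2*n)! : ℝ) / (m ! : ℝ) * coeff (2*n) (G m)

lemma aa_zero_zero : aa 0 0 = 1 := by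
  simp [aa, G]

lemma aa_zero_of_lt {n m : ℕ} (h : n < m) : aa n m = 0 := by
  rw [aa, coeff_G_lt m (2*n) (by omega), mul_zero]

lemma aa_succ_zero (n : ℕ) : aa (n+1) 0 = 0 := by
  rw [aa]
  rw [show G 0 = 1 from pow_zero _, coeff_one, if_neg (by omega), mul_zero]

lemma aa_star (n m : ℕ) :
    aa (n+1) (m+1) = (2*(m:ℝ)+1) * aa n m + ((m:ℝ)+1)*((m:ℝ)+1) * aa n (m+1) := by
  have h := congrArg (coeff (2*n)) (dd_G m)
  rw [coeff_derivative, coeff_derivative, map_add, map_smul, map_smul, smul_eq_mul,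
    smul_eq_mul] at h
  push_cast at h
  have hpos : (((2*n:ℝ))+2)*((2*n:ℝ)+1) ≠ 0 := by positivity
  have hc : coeff (2*n+1+1) (G (m+1)) =
      (((m:ℝ)+1)*((m:ℝ)+1) * coeff (2*n) (G (m+1))
        + ((m:ℝ)+1)*(2*(m:ℝ)+1) * coeff (2*n) (G m)) / ((((2*n:ℝ))+2)*((2*n:ℝ)+1)) := by
    rw [eq_div_iff hpos]
    linear_combination h
  unfold aa
  rw [show 2*(n+1) = 2*n+1+1 from by ring]
  have hf1 : ((2*n+1+1)! : ℝ) = ((2*n:ℝ)+2) * (((2*n:ℝ)+1) * ((2*n)! : ℝ)) := by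
    rw [Nat.factorial_succ, Nat.factorial_succ]; push_cast; ring
  have hf2 : (((m+1))! : ℝ) = ((m:ℝ)+1) * ((m ! : ℕ) : ℝ) := by
    rw [Nat.factorial_succ]; push_cast; ring
  rw [hf1, hf2, hc]
  have hm : ((m ! : ℕ) : ℝ) ≠ 0 := by exact_mod_cast Nat.factorial_ne_zero m
  have h2n : (((2*n)! : ℕ) : ℝ) ≠ 0 := by exact_mod_cast Nat.factorial_ne_zero _
  have hm1 : ((m:ℝ)+1) ≠ 0 := by positivity
  field_simp
  ring

lemma sum_even_vanish (N : ℕ) (g : ℕ → ℝ) (h : ∀ i, Even i → g i = 0) :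
    ∑ i ∈ Finset.range (2*N), g i = ∑ k ∈ Finset.range N, g (2*k+1) := by
  induction N with
  | zero => simp
  | succ n ih =>
    rw [show 2*(n+1) = (2*n)+1+1 from by ring, Finset.sum_range_succ, Finset.sum_range_succ,
      ih, h (2*n) ⟨n, by ring⟩, Finset.sum_range_succ]
    ring

lemma aa_sum (n m : ℕ) :
    aa (n+1) (m+1) = ∑ k ∈ Finset.range (n+1), ((2*n+1).choose (2*k) : ℝ) * aa k m := by
  have h := congrArg (coeff (2*n+1)) (d_G (m+1))
  simp only [Nat.add_sub_cancel] at h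
  rw [coeff_derivative, map_smul, smul_eq_mul, coeff_mul,
    Finset.Nat.sum_antidiagonal_eq_sum_range_succ_mk] at h
  simp only [Nat.succ_eq_add_one] at h
  rw [show 2*n+1+1 = 2*(n+1) from by ring] at h
  rw [sum_even_vanish (n+1) _ (fun i hi => by
    simp [coeff_sh, Nat.not_odd_iff_even.mpr hi])] at h
  rw [show (∑ k ∈ Finset.range (n+1),
        coeff (2*k+1) sh * coeff (2*n+1 - (2*k+1)) (G m))
      = ∑ k ∈ Finset.range (n+1), ((2*k+1)! : ℝ)⁻¹ * coeff (2*(n-k)) (G m) from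
    Finset.sum_congr rfl fun k hk => by
      rw [Finset.mem_range] at hk
      rw [coeff_sh, if_pos ⟨k, by ring⟩, show 2*n+1 - (2*k+1) = 2*(n-k) from by omega]] at h
  rw [← Finset.sum_range_reflect] at h
  rw [show (∑ j ∈ Finset.range (n+1),
        ((2*(n+1-1-j)+1)! : ℝ)⁻¹ * coeff (2*(n-(n+1-1-j))) (G m))
      = ∑ j ∈ Finset.range (n+1), ((2*(n-j)+1)! : ℝ)⁻¹ * coeff (2*j) (G m) from
    Finset.sum_congr rfl fun j hj => by
      rw [Finset.mem_range] at hj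
      rw [show n+1-1-j = n - j from by omega, show n - (n-j) = j from by omega]] at h
  push_cast at h
  have hpos : ((2*(n:ℝ))+2) ≠ 0 := by positivity
  have hc2 : coeff (2*(n+1)) (G (m+1)) =
      ((m:ℝ)+1) * (∑ j ∈ Finset.range (n+1), ((2*(n-j)+1)! : ℝ)⁻¹ * coeff (2*j) (G m))
        / ((2*(n:ℝ))+2) := by
    rw [eq_div_iff hpos]
    linear_combination h
  unfold aa
  rw [hc2, ← mul_div_assoc, div_eq_iff hpos, Finset.sum_mul, Finset.mul_sum, Finset.mul_sum]
  apply Finset.sum_congr rfl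
  intro k hk
  rw [Finset.mem_range] at hk
  rw [Nat.cast_choose ℝ (show 2*k ≤ 2*n+1 by omega),
    show 2*n+1 - 2*k = 2*(n-k)+1 from by omega]
  have hf1 : ((2*(n+1))! : ℝ) = ((2*(n:ℝ))+2) * ((2*n+1)! : ℝ) := by
    rw [show 2*(n+1) = (2*n+1)+1 from by ring, Nat.factorial_succ]; push_cast; ring
  have hf2 : ((m+1)! : ℝ) = ((m:ℝ)+1) * (m ! : ℝ) := by
    rw [Nat.factorial_succ]; push_cast; ring
  rw [hf1, hf2]
  have hm : ((m !: ℕ) : ℝ) ≠ 0 := by exact_mod_cast Nat.factorial_ne_zero m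
  have h1 : (((2*n+1)! : ℕ) : ℝ) ≠ 0 := by exact_mod_cast Nat.factorial_ne_zero _
  have h2 : (((2*(n-k)+1)! : ℕ) : ℝ) ≠ 0 := by exact_mod_cast Nat.factorial_ne_zero _
  have h3 : (((2*k)! : ℕ) : ℝ) ≠ 0 := by exact_mod_cast Nat.factorial_ne_zero _
  have hm1 : ((m:ℝ)+1) ≠ 0 := by positivity
  field_simp

end PSumRec

section PolyPart

open Polynomial PSumRec

noncomputable def Q : ℕ → Polynomial ℝ
  | 0 => 1
  | n+1 => Polynomial.X * Q n + (2*Polynomial.X^2 - Polynomial.X) * (Q n).derivative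
      - Polynomial.X^2 * (Q n).derivative.derivative

lemma hasDeriv_expP (P : Polynomial ℝ) (y : ℝ) :
    HasDerivAt (fun y => Real.exp (-y) * P.eval y)
      (Real.exp (-y) * ((P.derivative - P).eval y)) y := by
  have h1 : HasDerivAt (fun y : ℝ => Real.exp (-y)) (-Real.exp (-y)) y := by
    simpa [Function.comp_def] using (Real.hasDerivAt_exp (-y)).comp y (hasDerivAt_neg y)
  have h2 := P.hasDerivAt y
  have : HasDerivAt (fun y => Real.exp (-y) * P.eval y) _ y := h1.mul h2
  convert this using 1
  simp [Polynomial.eval_sub]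
  ring

lemma deriv_expP (P : Polynomial ℝ) :
    deriv (fun y => Real.exp (-y) * P.eval y) = fun y => Real.exp (-y) * ((P.derivative - P).eval y) := by
  funext y
  exact (hasDeriv_expP P y).deriv

lemma opA_step (P : Polynomial ℝ) :
    opA (fun y => Real.exp (-y) * P.eval y) =
    fun x => Real.exp (-x) * (Polynomial.X * P + (2*Polynomial.X^2 - Polynomial.X) * P.derivative
      - Polynomial.X^2 * P.derivative.derivative).eval x := by
  funext x
  unfold opA
  rw [deriv_expP P]
  have hinner : (fun y : ℝ => y * (Real.exp (-y) * (P.derivative - P).eval y))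
      = fun y => Real.exp (-y) * ((Polynomial.X * (P.derivative - P)).eval y) := by
    funext y; simp; ring
  rw [hinner, deriv_expP (Polynomial.X * (P.derivative - P))]
  simp only [Polynomial.eval_sub, Polynomial.eval_mul, Polynomial.eval_add,
    Polynomial.derivative_mul, Polynomial.derivative_X, Polynomial.eval_X, Polynomial.eval_pow,
    Polynomial.derivative_sub, Polynomial.eval_ofNat, one_mul]
  ring

lemma iter_opA (n : ℕ) :
    (opA^[n] (fun y => Real.exp (-y))) = fun x => Real.exp (-x) * (Q n).eval x := by
  induction n with
  | zero => funext x; simp [Q]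
  | succ n ih =>
    rw [Function.iterate_succ_apply', ih, opA_step (Q n)]
    rfl

lemma coeff_X_mul' (p : Polynomial ℝ) (m : ℕ) :
    (Polynomial.X * p).coeff m = if 1 ≤ m then p.coeff (m-1) else 0 := by
  rw [← pow_one (Polynomial.X : Polynomial ℝ), Polynomial.coeff_X_pow_mul']

lemma Q_coeff : ∀ n m : ℕ, (Q n).coeff m = (-1:ℝ)^(n+m) * aa n m := by
  intro n
  induction n with
  | zero =>
    intro m
    cases m with
    | zero => simp [Q, aa_zero_zero]
    | succ m =>
      simp [Q, aa_zero_of_lt (Nat.succ_pos m), Polynomial.coeff_one,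
        (Nat.succ_ne_zero m).symm]
  | succ n ih =>
    intro m
    show (Polynomial.X * Q n + (2*Polynomial.X^2 - Polynomial.X) * (Q n).derivative
      - Polynomial.X^2 * (Q n).derivative.derivative).coeff m = _
    rw [show ((2*Polynomial.X^2 - Polynomial.X) : Polynomial ℝ)
        = Polynomial.C 2 * Polynomial.X^2 - Polynomial.X from by
          rw [show Polynomial.C (2:ℝ) = 2 from rfl]]
    simp only [Polynomial.coeff_add, Polynomial.coeff_sub, sub_mul, mul_assoc,
      Polynomial.coeff_C_mul, coeff_X_mul', Polynomial.coeff_X_pow_mul']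
    match m with
    | 0 =>
      simp [aa_succ_zero]
    | 1 =>
      norm_num
      rw [Polynomial.coeff_derivative, ih 0, ih 1, aa_star n 0]
      push_cast
      simp only [pow_succ, pow_add, pow_zero]
      ring
    | (l+2) =>
      simp only [show 1 ≤ l+2 from by omega, show 2 ≤ l+2 from by omega, if_pos,
        show l+2-1 = l+1 from by omega, show l+2-2 = l from by omega, if_true]
      simp only [Polynomial.coeff_derivative, ih]
      rw [aa_star n (l+1)]
      push_cast
      simp only [pow_succ, pow_add, pow_zero]
      ring

lemma p_eval (n : ℕ) (x : ℝ) : p n x = (-1:ℝ)^n * (Q n).eval x := by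
  rw [p, iter_opA]
  have : Real.exp x * (Real.exp (-x) * (Q n).eval x) = (Q n).eval x := by
    rw [← mul_assoc, ← Real.exp_add]
    simp
  rw [mul_assoc, this]

lemma eval_Q (k N : ℕ) (hk : k < N) (x : ℝ) :
    (Q k).eval x = ∑ m ∈ Finset.range N, (-1:ℝ)^(k+m) * aa k m * x^m := by
  have hdeg : (Q k).natDegree < N := by
    apply Nat.lt_of_le_of_lt _ hk
    rw [Polynomial.natDegree_le_iff_coeff_eq_zero]
    intro m hm
    rw [Q_coeff, aa_zero_of_lt hm, mul_zero]
  rw [Polynomial.eval_eq_sum_range' hdeg]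
  exact Finset.sum_congr rfl fun m _ => by rw [Q_coeff]

end PolyPart

theorem p_sum_recurrence (n : ℕ) (x : ℝ) :
    p (n+1) x = -x * ∑ k ∈ Finset.range (n+1),
      ((2*n+1).choose (2*k) : ℝ) * p k x := by
  have hsign : ∀ k m : ℕ, (-1:ℝ)^k * (-1)^(k+m) = (-1)^m := by
    intro k m
    rw [← pow_add, show k+(k+m) = 2*k+m from by ring, pow_add, pow_mul, neg_one_sq,
      one_pow, one_mul]
  have hp : ∀ k N : ℕ, k < N → p k x = ∑ m ∈ Finset.range N, (-1:ℝ)^m * PSumRec.aa k m * x^m := by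
    intro k N hk
    rw [p_eval, eval_Q k N hk, Finset.mul_sum]
    apply Finset.sum_congr rfl
    intro m _
    rw [← mul_assoc, ← mul_assoc, hsign k m]
  calc p (n+1) x
      = ∑ i ∈ Finset.range (n+1), ((-1:ℝ)^(i+1) * PSumRec.aa (n+1) (i+1) * x^(i+1)) := by
        rw [hp (n+1) (n+2) (by omega), Finset.sum_range_succ']
        simp [PSumRec.aa_succ_zero]
    _ = ∑ i ∈ Finset.range (n+1), ∑ k ∈ Finset.range (n+1),
          ((2*n+1).choose (2*k) : ℝ) * ((-1:ℝ)^(i+1) * PSumRec.aa k i * x^(i+1)) := by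
        apply Finset.sum_congr rfl
        intro i _
        rw [PSumRec.aa_sum n i, Finset.mul_sum, Finset.sum_mul]
        exact Finset.sum_congr rfl fun k _ => by ring
    _ = ∑ k ∈ Finset.range (n+1), ∑ i ∈ Finset.range (n+1),
          ((2*n+1).choose (2*k) : ℝ) * ((-1:ℝ)^(i+1) * PSumRec.aa k i * x^(i+1)) :=
        Finset.sum_comm
    _ = -x * ∑ k ∈ Finset.range (n+1), ((2*n+1).choose (2*k) : ℝ) * p k x := by
        rw [Finset.mul_sum]
        apply Finset.sum_congr rfl
        intro k hk
        rw [Finset.mem_range] at hk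
        rw [hp k (n+1) hk, Finset.mul_sum, Finset.mul_sum]
        exact Finset.sum_congr rfl fun i _ => by ring
end

section
/- For x > 0, the moments μ_n(x) = ∫_0^∞ τ^{2n}·(K_{iτ}(x))² dτ satisfy x·μ_0′(x) = −4·μ_1(x). -/
open MeasureTheory Real

/-- Moments of the square of the Macdonald function. -/
noncomputable def μ (n : ℕ) (x : ℝ) : ℝ :=
  ∫ τ in Set.Ioi (0:ℝ), τ^(2*n) * (Kit τ x)^2

namespace KitAux

open Set Filter Asymptotics Topology
open scoped FourierTransform RealInnerProductSpace

/-- cosh lower bound -/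
lemma cosh_ge_sq (t : ℝ) : t^2/8 ≤ Real.cosh t := by
  have h1 : |t|/2 + 1 ≤ Real.exp (|t|/2) := Real.add_one_le_exp _
  have h2 : Real.exp |t| = Real.exp (|t|/2) * Real.exp (|t|/2) := by
    rw [← Real.exp_add]; ring_nf
  have h3 : Real.exp (-|t|) > 0 := Real.exp_pos _
  have h4 : Real.cosh t = (Real.exp |t| + Real.exp (-|t|))/2 := by
    rw [← Real.cosh_abs, Real.cosh_eq]
  have h5 : (0:ℝ) ≤ |t| := abs_nonneg t
  have h6 : |t|^2 = t^2 := sq_abs t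
  nlinarith [sq_nonneg (|t|/2)]

lemma cosh_le_exp {t : ℝ} (ht : 0 ≤ t) : Real.cosh t ≤ Real.exp t := by
  rw [Real.cosh_eq]
  have := Real.exp_le_exp.2 (neg_le_self ht)
  linarith

lemma abs_sinh_le_exp {t : ℝ} (ht : 0 ≤ t) : |Real.sinh t| ≤ Real.exp t := by
  rw [Real.abs_sinh, abs_of_nonneg ht]
  exact (Real.sinh_lt_cosh t).le.trans (cosh_le_exp ht)

/-- Master integrability lemma -/
lemma integrable_exp_mul_exp (hx : 0 < (x:ℝ)) (c : ℝ) :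
    IntegrableOn (fun t => Real.exp (c * t) * Real.exp (-x * Real.cosh t)) (Ioi 0) := by
  apply integrable_of_isBigO_exp_neg (b := 1) one_pos (by fun_prop)
  rw [isBigO_iff]
  refine ⟨1, ?_⟩
  filter_upwards [eventually_ge_atTop (8*(|c|+1)/x), eventually_ge_atTop 0] with t h1 h0
  have hc : t^2/8 ≤ Real.cosh t := cosh_ge_sq t
  have : c * t - x * Real.cosh t ≤ -t := by
    have h2 : x * (t^2/8) ≤ x * Real.cosh t := by nlinarith
    have h3 : (|c|+1) * t ≤ x * (t^2/8) := by
      rcases eq_or_lt_of_le h0 with h|h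
      · rw [← h]; ring_nf; positivity
      · have : 8*(|c|+1)/x ≤ t := h1
        rw [div_le_iff₀ hx] at this
        nlinarith
    nlinarith [le_abs_self c, abs_nonneg c]
  rw [one_mul, ← Real.exp_add]
  simp only [Real.norm_eq_abs, Real.abs_exp, Real.exp_le_exp]
  linarith


variable {x : ℝ}

/-- integrability of `P t * exp (-x cosh t)` for polynomially/exponentially bounded weights -/
lemma integrableOn_weight (hx : 0 < x) {P : ℝ → ℝ} (hP : Continuous P) (C c : ℝ)
    (hbound : ∀ t, 0 ≤ t → |P t| ≤ C * Real.exp (c * t)) :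
    IntegrableOn (fun t => P t * Real.exp (-x * Real.cosh t)) (Ioi 0) := by
  apply Integrable.mono' (((integrable_exp_mul_exp hx c).const_mul C))
    (Continuous.aestronglyMeasurable (by fun_prop))
  filter_upwards [ae_restrict_mem measurableSet_Ioi] with t ht
  have ht0 : (0:ℝ) ≤ t := le_of_lt ht
  rw [norm_mul, Real.norm_eq_abs, Real.norm_eq_abs, Real.abs_exp]
  have := mul_le_mul_of_nonneg_right (hbound t ht0) (Real.exp_pos (-x * Real.cosh t)).le
  linarith [this]

lemma int_g (hx : 0 < x) : IntegrableOn (fun t => Real.exp (-x * Real.cosh t)) (Ioi 0) := by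
  have := integrableOn_weight hx (continuous_const (y := (1:ℝ))) 1 0
    (fun t ht => by norm_num)
  simpa using this

lemma int_cosh_g (hx : 0 < x) :
    IntegrableOn (fun t => Real.cosh t * Real.exp (-x * Real.cosh t)) (Ioi 0) :=
  integrableOn_weight hx Real.continuous_cosh 1 1 (fun t ht => by
    rw [abs_of_nonneg (Real.cosh_pos t).le, one_mul, one_mul]
    exact cosh_le_exp ht)

lemma int_sinh_sq_g (hx : 0 < x) :
    IntegrableOn (fun t => Real.sinh t ^ 2 * Real.exp (-x * Real.cosh t)) (Ioi 0) :=
  integrableOn_weight hx (by fun_prop) 1 2 (fun t ht => by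
    rw [abs_of_nonneg (sq_nonneg _), one_mul]
    calc Real.sinh t ^ 2 = |Real.sinh t| ^2 := (sq_abs _).symm
    _ ≤ Real.exp t ^ 2 := by
        apply pow_le_pow_left₀ (abs_nonneg _) (abs_sinh_le_exp ht)
    _ = Real.exp (2 * t) := by rw [← Real.exp_nat_mul]; norm_num)

lemma int_gpp (hx : 0 < x) :
    IntegrableOn (fun t => (x^2 * Real.sinh t ^ 2 - x * Real.cosh t)
      * Real.exp (-x * Real.cosh t)) (Ioi 0) := by
  have h1 := (int_sinh_sq_g hx).const_mul (x^2)
  have h2 := (int_cosh_g hx).const_mul x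
  apply (h1.sub h2).congr
  filter_upwards with t
  simp only [Pi.sub_apply]
  ring

lemma int_gpp_abs_bound (hx : 0 < x) (t : ℝ) :
    |x^2 * Real.sinh t ^ 2 - x * Real.cosh t| ≤
      x^2 * Real.sinh t ^ 2 + x * Real.cosh t := by
  have h1 : 0 ≤ x^2 * Real.sinh t ^ 2 := by positivity
  have h2 : 0 ≤ x * Real.cosh t := by positivity
  rw [abs_le]; constructor <;> linarith [abs_nonneg (x^2 * Real.sinh t ^ 2 - x * Real.cosh t)]

/-- The H-function: integrable majorant pieces -/
noncomputable def M0 (x : ℝ) : ℝ := ∫ t in Ioi (0:ℝ), Real.exp (-x * Real.cosh t)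
noncomputable def M2 (x : ℝ) : ℝ := ∫ t in Ioi (0:ℝ),
  (x^2 * Real.sinh t ^ 2 + x * Real.cosh t) * Real.exp (-x * Real.cosh t)

lemma M0_nonneg (x : ℝ) : 0 ≤ M0 x := integral_nonneg fun t => (Real.exp_pos _).le
lemma M2_nonneg (hx : 0 < x) : 0 ≤ M2 x := integral_nonneg fun t => by positivity

lemma int_kit_integrand (hx : 0 < x) (τ : ℝ) :
    IntegrableOn (fun t => Real.exp (-x * Real.cosh t) * Real.cos (τ * t)) (Ioi 0) := by
  apply Integrable.mono' (int_g hx) (Continuous.aestronglyMeasurable (by fun_prop))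
  filter_upwards with t
  rw [norm_mul, Real.norm_eq_abs, Real.abs_exp, Real.norm_eq_abs]
  calc Real.exp (-x * Real.cosh t) * |Real.cos (τ*t)| ≤ Real.exp (-x * Real.cosh t) * 1 := by
        exact mul_le_mul_of_nonneg_left (Real.abs_cos_le_one _) (Real.exp_pos _).le
  _ = _ := mul_one _


lemma tendsto_cosh_atTop : Tendsto Real.cosh atTop atTop := by
  apply tendsto_atTop_mono (fun t => cosh_ge_sq t)
  apply Tendsto.atTop_div_const (by norm_num)
  exact tendsto_pow_atTop two_ne_zero

lemma tendsto_g_atTop (hx : 0 < x) :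
    Tendsto (fun t => Real.exp (-x * Real.cosh t)) atTop (𝓝 0) := by
  have h1 : Tendsto (fun t => x * Real.cosh t) atTop atTop :=
    tendsto_cosh_atTop.const_mul_atTop hx
  have := tendsto_exp_neg_atTop_nhds_zero.comp h1
  simpa [Function.comp_def, neg_mul] using this

lemma tendsto_cosh_g_atTop (hx : 0 < x) :
    Tendsto (fun t => Real.cosh t * Real.exp (-x * Real.cosh t)) atTop (𝓝 0) := by
  have h1 : Tendsto (fun u : ℝ => u * Real.exp (-(x*u))) atTop (𝓝 0) := by
    have h2 : Tendsto (fun u : ℝ => x * u) atTop atTop := tendsto_id.const_mul_atTop hx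
    have h3 := ((tendsto_pow_mul_exp_neg_atTop_nhds_zero 1).comp h2).const_mul (1/x)
    rw [mul_zero] at h3
    apply h3.congr
    intro u
    simp only [Function.comp_apply, pow_one]
    field_simp
  have := h1.comp tendsto_cosh_atTop
  simpa [Function.comp_def] using this

lemma abs_kit_le (hx : 0 < x) (τ : ℝ) : |Kit τ x| ≤ M0 x := by
  rw [Kit, ← Real.norm_eq_abs]
  apply (norm_integral_le_integral_norm _).trans
  rw [M0]
  apply setIntegral_mono_on _ (int_g hx) measurableSet_Ioi
  · intro t _
    rw [Real.norm_eq_abs, abs_mul, Real.abs_exp]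
    calc Real.exp (-x * Real.cosh t) * |Real.cos (τ*t)| ≤ Real.exp (-x * Real.cosh t) * 1 :=
        mul_le_mul_of_nonneg_left (Real.abs_cos_le_one _) (Real.exp_pos _).le
    _ = _ := mul_one _
  · exact (int_kit_integrand hx τ).norm

lemma continuous_kit (hx : 0 < x) : Continuous (fun τ => Kit τ x) := by
  apply continuous_of_dominated (bound := fun t => Real.exp (-x * Real.cosh t))
  · intro τ
    exact (Continuous.aestronglyMeasurable (by fun_prop))
  · intro τ
    filter_upwards with t
    rw [norm_mul, Real.norm_eq_abs, Real.abs_exp, Real.norm_eq_abs]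
    calc Real.exp (-x * Real.cosh t) * |Real.cos (τ*t)| ≤ Real.exp (-x * Real.cosh t) * 1 :=
        mul_le_mul_of_nonneg_left (Real.abs_cos_le_one _) (Real.exp_pos _).le
    _ = _ := mul_one _
  · exact int_g hx
  · filter_upwards with t
    fun_prop

/-- Integration by parts: the second-moment identity. -/
lemma ibp_kit (hx : 0 < x) (τ : ℝ) :
    ∫ t in Ioi (0:ℝ), (x^2 * Real.sinh t ^ 2 - x * Real.cosh t) * Real.exp (-x * Real.cosh t)
      * Real.cos (τ * t) = -(τ^2) * Kit τ x := by
  set g : ℝ → ℝ := fun t => Real.exp (-x * Real.cosh t) with hg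
  set F : ℝ → ℝ := fun t => τ * (g t * Real.sin (τ * t))
      + (-(x * Real.sinh t) * g t) * Real.cos (τ * t) with hF
  have hgd : ∀ t : ℝ, HasDerivAt g (-(x * Real.sinh t) * g t) t := by
    intro t
    have := ((Real.hasDerivAt_cosh t).const_mul (-x)).exp
    simpa [hg, mul_comm, neg_mul] using this
  have hFd : ∀ t : ℝ, HasDerivAt F
      (τ^2 * (g t * Real.cos (τ * t))
        + (x^2 * Real.sinh t ^ 2 - x * Real.cosh t) * g t * Real.cos (τ * t)) t := by
    intro t
    have hsin : HasDerivAt (fun t => Real.sin (τ * t)) (Real.cos (τ * t) * τ) t := by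
      simpa [Function.comp_def] using (Real.hasDerivAt_sin (τ * t)).comp t ((hasDerivAt_id t).const_mul τ)
    have hcos : HasDerivAt (fun t => Real.cos (τ * t)) (-Real.sin (τ * t) * τ) t := by
      simpa [Function.comp_def] using (Real.hasDerivAt_cos (τ * t)).comp t ((hasDerivAt_id t).const_mul τ)
    have hgp : HasDerivAt (fun t => -(x * Real.sinh t) * g t)
        ((x^2 * Real.sinh t ^ 2 - x * Real.cosh t) * g t) t := by
      have h1 : HasDerivAt (fun t => -(x * Real.sinh t)) (-(x * Real.cosh t)) t :=
        (((Real.hasDerivAt_sinh t).const_mul x).neg)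
      have := h1.fun_mul (hgd t)
      exact this.congr_deriv (by ring)
    have hterm1 : HasDerivAt (fun t => τ * (g t * Real.sin (τ * t)))
        (τ * ((-(x * Real.sinh t) * g t) * Real.sin (τ * t) + g t * (Real.cos (τ * t) * τ))) t :=
      ((hgd t).mul hsin).const_mul τ
    have hterm2 : HasDerivAt (fun t => (-(x * Real.sinh t) * g t) * Real.cos (τ * t))
        ((x^2 * Real.sinh t ^ 2 - x * Real.cosh t) * g t * Real.cos (τ * t)
          + (-(x * Real.sinh t) * g t) * (-Real.sin (τ * t) * τ)) t :=
      hgp.mul hcos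
    have := hterm1.fun_add hterm2
    exact this.congr_deriv (by ring)
  have hzero : (0:ℝ) = 0 - F 0 := by
    simp [hF, hg]
  have htend : Tendsto F atTop (𝓝 0) := by
    have hb : Tendsto (fun t => |τ| * g t + x * (Real.cosh t * g t)) atTop (𝓝 0) := by
      have h1 := (tendsto_g_atTop hx).const_mul |τ|
      have h2 := (tendsto_cosh_g_atTop hx).const_mul x
      have h3 : Tendsto (fun t => |τ| * Real.exp (-(x * Real.cosh t))
          + x * (Real.cosh t * Real.exp (-(x * Real.cosh t)))) atTop (𝓝 0) := by
        simpa [neg_mul] using h1.add h2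
      simpa only [hg, neg_mul] using h3
    apply squeeze_zero_norm ?_ hb
    · intro t
      have hb1 : |Real.sin (τ*t)| ≤ 1 := Real.abs_sin_le_one _
      have hb2 : |Real.cos (τ*t)| ≤ 1 := Real.abs_cos_le_one _
      have hb3 : |Real.sinh t| ≤ Real.cosh t := by
        rw [Real.abs_sinh, ← Real.cosh_abs]
        exact (Real.sinh_lt_cosh _).le
      have hg0 : 0 < g t := Real.exp_pos _
      rw [hF, Real.norm_eq_abs]
      calc |τ * (g t * Real.sin (τ * t)) + (-(x * Real.sinh t) * g t) * Real.cos (τ * t)|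
          ≤ |τ * (g t * Real.sin (τ * t))| + |(-(x * Real.sinh t) * g t) * Real.cos (τ * t)| :=
            abs_add_le _ _
        _ ≤ |τ| * g t + x * (Real.cosh t * g t) := by
            rw [abs_mul, abs_mul, abs_mul, abs_mul, abs_neg, abs_mul,
              abs_of_pos hg0, abs_of_pos hx]
            have e1 : |τ| * (g t * |Real.sin (τ*t)|) ≤ |τ| * g t := by
              have h3 : g t * |Real.sin (τ*t)| ≤ g t * 1 :=
                mul_le_mul_of_nonneg_left hb1 hg0.le
              have h4 := mul_le_mul_of_nonneg_left h3 (abs_nonneg τ)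
              simpa using h4
            have e2 : x * |Real.sinh t| * g t * |Real.cos (τ*t)| ≤ x * (Real.cosh t * g t) := by
              have h4 : x * |Real.sinh t| * g t * |Real.cos (τ*t)|
                  ≤ x * |Real.sinh t| * g t := by
                have := mul_le_mul_of_nonneg_left hb2
                  (by positivity : (0:ℝ) ≤ x * |Real.sinh t| * g t)
                simpa using this
              have h5 : x * |Real.sinh t| * g t ≤ x * (Real.cosh t * g t) := by
                rw [mul_assoc]
                exact mul_le_mul_of_nonneg_left
                  (mul_le_mul_of_nonneg_right hb3 hg0.le) hx.le
              exact h4.trans h5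
            exact add_le_add e1 e2
  have key := integral_Ioi_of_hasDerivAt_of_tendsto
    (f := F)
    (f' := fun t => τ^2 * (g t * Real.cos (τ * t))
        + (x^2 * Real.sinh t ^ 2 - x * Real.cosh t) * g t * Real.cos (τ * t))
    (a := 0) (m := 0)
    (Continuous.continuousWithinAt (by unfold F g; fun_prop))
    (fun t _ => hFd t) ?_ htend
  · have hint1 : IntegrableOn (fun t => τ^2 * (g t * Real.cos (τ * t))) (Ioi (0:ℝ)) :=
      (int_kit_integrand hx τ).const_mul _
    have hint2 : IntegrableOn
        (fun t => (x^2 * Real.sinh t ^ 2 - x * Real.cosh t) * g t * Real.cos (τ * t))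
        (Ioi (0:ℝ)) := by
      apply Integrable.mono' ((int_sinh_sq_g hx).const_mul (x^2) |>.add
        ((int_cosh_g hx).const_mul x))
        (Continuous.aestronglyMeasurable (by unfold g; fun_prop))
      filter_upwards with t
      rw [Real.norm_eq_abs, abs_mul, abs_mul]
      have h1 := int_gpp_abs_bound hx (x := x) t
      have hg0 : (0:ℝ) < g t := Real.exp_pos _
      have := mul_le_mul_of_nonneg_right h1 hg0.le
      calc |x^2 * Real.sinh t ^2 - x * Real.cosh t| * |g t| * |Real.cos (τ*t)|
          ≤ |x^2 * Real.sinh t ^2 - x * Real.cosh t| * |g t| * 1 :=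
            mul_le_mul_of_nonneg_left (Real.abs_cos_le_one _) (by positivity)
        _ = |x^2 * Real.sinh t ^2 - x * Real.cosh t| * g t := by
            rw [abs_of_pos hg0, mul_one]
        _ ≤ (x^2 * Real.sinh t ^2 + x * Real.cosh t) * g t := this
        _ = x^2 * (Real.sinh t ^2 * g t) + x * (Real.cosh t * g t) := by ring
    have hF0 : F 0 = 0 := by simp [hF, hg]
    rw [hF0, sub_zero, integral_add hint1 hint2] at key
    have hKit : ∫ t in Ioi (0:ℝ), τ^2 * (g t * Real.cos (τ * t)) = τ^2 * Kit τ x := by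
      rw [Kit, ← integral_const_mul]
    rw [hKit] at key
    show ∫ t in Ioi (0:ℝ),
        (x^2 * Real.sinh t ^ 2 - x * Real.cosh t) * g t * Real.cos (τ * t) = -(τ^2) * Kit τ x
    linarith
  · apply Integrable.add ((int_kit_integrand hx τ).const_mul _)
    apply Integrable.mono' ((int_sinh_sq_g hx).const_mul (x^2) |>.add
        ((int_cosh_g hx).const_mul x))
      (Continuous.aestronglyMeasurable (by unfold g; fun_prop))
    filter_upwards with t
    rw [Real.norm_eq_abs, abs_mul, abs_mul]
    have h1 := int_gpp_abs_bound hx (x := x) t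
    have hg0 : (0:ℝ) < g t := Real.exp_pos _
    have := mul_le_mul_of_nonneg_right h1 hg0.le
    calc |x^2 * Real.sinh t ^2 - x * Real.cosh t| * |g t| * |Real.cos (τ*t)|
        ≤ |x^2 * Real.sinh t ^2 - x * Real.cosh t| * |g t| * 1 :=
          mul_le_mul_of_nonneg_left (Real.abs_cos_le_one _) (by positivity)
      _ = |x^2 * Real.sinh t ^2 - x * Real.cosh t| * g t := by
          rw [abs_of_pos hg0, mul_one]
      _ ≤ (x^2 * Real.sinh t ^2 + x * Real.cosh t) * g t := this
      _ = x^2 * (Real.sinh t ^2 * g t) + x * (Real.cosh t * g t) := by ring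


lemma int_M2_integrand (hx : 0 < x) : IntegrableOn
    (fun t => (x^2 * Real.sinh t ^ 2 + x * Real.cosh t) * Real.exp (-x * Real.cosh t))
    (Ioi (0:ℝ)) := by
  apply (((int_sinh_sq_g hx).const_mul (x^2)).add ((int_cosh_g hx).const_mul x)).congr
  filter_upwards with t
  simp only [Pi.add_apply]
  ring

lemma int_gpp_cos (hx : 0 < x) (τ : ℝ) : IntegrableOn
    (fun t => (x^2 * Real.sinh t ^ 2 - x * Real.cosh t) * Real.exp (-x * Real.cosh t)
      * Real.cos (τ * t)) (Ioi (0:ℝ)) := by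
  apply Integrable.mono' (int_M2_integrand hx)
    (Continuous.aestronglyMeasurable (by fun_prop))
  filter_upwards with t
  have hg0 : (0:ℝ) < Real.exp (-x * Real.cosh t) := Real.exp_pos _
  rw [Real.norm_eq_abs, abs_mul, abs_mul, Real.abs_exp]
  calc |x^2 * Real.sinh t ^2 - x * Real.cosh t| * Real.exp (-x * Real.cosh t) * |Real.cos (τ*t)|
      ≤ |x^2 * Real.sinh t ^2 - x * Real.cosh t| * Real.exp (-x * Real.cosh t) * 1 :=
        mul_le_mul_of_nonneg_left (Real.abs_cos_le_one _) (by positivity)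
    _ = |x^2 * Real.sinh t ^2 - x * Real.cosh t| * Real.exp (-x * Real.cosh t) := mul_one _
    _ ≤ (x^2 * Real.sinh t ^2 + x * Real.cosh t) * Real.exp (-x * Real.cosh t) :=
        mul_le_mul_of_nonneg_right (int_gpp_abs_bound hx t) hg0.le

lemma sq_kit_le (hx : 0 < x) (τ : ℝ) : τ^2 * |Kit τ x| ≤ M2 x := by
  have h := ibp_kit hx (x := x) τ
  have heq : τ^2 * |Kit τ x| = |∫ t in Ioi (0:ℝ),
      (x^2 * Real.sinh t ^ 2 - x * Real.cosh t) * Real.exp (-x * Real.cosh t)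
        * Real.cos (τ * t)| := by
    rw [h, abs_mul, abs_neg, abs_of_nonneg (sq_nonneg τ)]
  rw [heq, ← Real.norm_eq_abs]
  apply (norm_integral_le_integral_norm _).trans
  rw [M2]
  apply setIntegral_mono_on (int_gpp_cos hx τ).norm (int_M2_integrand hx) measurableSet_Ioi
  intro t _
  have hg0 : (0:ℝ) < Real.exp (-x * Real.cosh t) := Real.exp_pos _
  rw [Real.norm_eq_abs, abs_mul, abs_mul, Real.abs_exp]
  calc |x^2 * Real.sinh t ^2 - x * Real.cosh t| * Real.exp (-x * Real.cosh t) * |Real.cos (τ*t)|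
      ≤ |x^2 * Real.sinh t ^2 - x * Real.cosh t| * Real.exp (-x * Real.cosh t) * 1 :=
        mul_le_mul_of_nonneg_left (Real.abs_cos_le_one _) (by positivity)
    _ = |x^2 * Real.sinh t ^2 - x * Real.cosh t| * Real.exp (-x * Real.cosh t) := mul_one _
    _ ≤ (x^2 * Real.sinh t ^2 + x * Real.cosh t) * Real.exp (-x * Real.cosh t) :=
        mul_le_mul_of_nonneg_right (int_gpp_abs_bound hx t) hg0.le

/-- `Kit · x` is integrable on `(0, ∞)`. -/
lemma int_kit (hx : 0 < x) : IntegrableOn (fun τ => Kit τ x) (Ioi (0:ℝ)) := by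
  have hmeas : AEStronglyMeasurable (fun τ => Kit τ x) (volume.restrict (Ioi (0:ℝ))) :=
    (continuous_kit hx).aestronglyMeasurable.restrict
  have h1 : IntegrableOn (fun τ => Kit τ x) (Ioc (0:ℝ) 1) := by
    apply Integrable.mono' (g := fun _ => M0 x)
      (integrableOn_const (by simp [measure_Ioc_lt_top]))
      ((continuous_kit hx).aestronglyMeasurable.restrict)
    filter_upwards with τ
    rw [Real.norm_eq_abs]
    exact abs_kit_le hx τ
  have h2 : IntegrableOn (fun τ => Kit τ x) (Ioi (1:ℝ)) := by
    apply Integrable.mono' (g := fun τ => M2 x * τ ^ (-2:ℝ))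
      (((integrableOn_Ioi_rpow_of_lt (by norm_num) one_pos)).const_mul (M2 x))
      ((continuous_kit hx).aestronglyMeasurable.restrict)
    filter_upwards [ae_restrict_mem measurableSet_Ioi] with τ hτ
    have hτ0 : (0:ℝ) < τ := lt_trans one_pos hτ
    have hτ2 : (0:ℝ) < τ^2 := by positivity
    have := sq_kit_le hx (x := x) τ
    rw [Real.norm_eq_abs, Real.rpow_neg hτ0.le]
    rw [show ((2:ℝ)) = ((2:ℕ):ℝ) by norm_num, Real.rpow_natCast]
    calc |Kit τ x| = (τ^2)⁻¹ * (τ^2 * |Kit τ x|) := by field_simp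
    _ ≤ (τ^2)⁻¹ * M2 x := mul_le_mul_of_nonneg_left this (by positivity)
    _ = M2 x * (τ^2)⁻¹ := mul_comm _ _
  have : Ioc (0:ℝ) 1 ∪ Ioi (1:ℝ) = Ioi 0 := Ioc_union_Ioi_eq_Ioi one_pos.le
  rw [← this]
  exact h1.union h2

lemma int_kit_sq (hx : 0 < x) : IntegrableOn (fun τ => (Kit τ x)^2) (Ioi (0:ℝ)) := by
  apply Integrable.mono' ((int_kit hx).norm.const_mul (M0 x))
    ((continuous_kit hx).pow 2).aestronglyMeasurable.restrict
  filter_upwards with τ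
  rw [Real.norm_eq_abs, Real.norm_eq_abs, Pi.pow_apply, abs_pow, sq_abs]
  calc (Kit τ x)^2 = |Kit τ x| * |Kit τ x| := by rw [← abs_mul, abs_mul_self, sq]
  _ ≤ M0 x * |Kit τ x| := mul_le_mul_of_nonneg_right (abs_kit_le hx τ) (abs_nonneg _)

lemma int_kit_sq_mul (hx : 0 < x) :
    IntegrableOn (fun τ => τ^2 * (Kit τ x)^2) (Ioi (0:ℝ)) := by
  apply Integrable.mono' ((int_kit hx).norm.const_mul (M2 x))
    (Continuous.aestronglyMeasurable (by
      exact (continuous_pow 2).mul ((continuous_kit hx).pow 2))).restrict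
  filter_upwards with τ
  rw [Real.norm_eq_abs, Real.norm_eq_abs, abs_mul, abs_pow, sq_abs, abs_pow, sq_abs]
  calc τ^2 * (Kit τ x)^2 = (τ^2 * |Kit τ x|) * |Kit τ x| := by rw [← sq_abs (Kit τ x)]; ring
  _ ≤ M2 x * |Kit τ x| := mul_le_mul_of_nonneg_right (sq_kit_le hx τ) (abs_nonneg _)


lemma kit_even (τ x : ℝ) : Kit (-τ) x = Kit τ x := by
  unfold Kit
  congr 1
  ext t
  rw [show (-τ * t) = -(τ*t) by ring, Real.cos_neg]

/-- integrability of even extensions -/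
lemma integrable_comp_abs {f : ℝ → ℝ} (hf : IntegrableOn f (Ioi 0)) :
    Integrable (fun t => f |t|) := by
  have int_Ioi : IntegrableOn (fun t => f |t|) (Ioi 0) := by
    apply hf.congr_fun ?_ measurableSet_Ioi
    intro t ht
    show f t = f |t|
    rw [abs_of_pos ht]
  have int_Iic : IntegrableOn (fun t ↦ f |t|) (Iic 0) := by
    rw [← Measure.map_neg_eq_self (volume : Measure ℝ)]
    have m : MeasurableEmbedding fun t : ℝ => -t := (Homeomorph.neg ℝ).measurableEmbedding
    rw [m.integrableOn_map_iff]
    simp_rw [Function.comp_def, abs_neg, neg_preimage, neg_Iic, neg_zero]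
    exact Iff.mpr integrableOn_Ici_iff_integrableOn_Ioi int_Ioi
  have : Iic (0:ℝ) ∪ Ioi 0 = univ := Iic_union_Ioi
  have h := int_Iic.union int_Ioi
  rw [this] at h
  exact integrableOn_univ.mp h

lemma int_g_real (hx : 0 < x) : Integrable (fun t : ℝ => Real.exp (-x * Real.cosh t)) := by
  have h := integrable_comp_abs (f := fun t => Real.exp (-x * Real.cosh t)) (int_g hx)
  apply h.congr
  filter_upwards with t
  rw [Real.cosh_abs]

/-- Even-function reduction for Fourier-type integrals. -/
lemma integral_even_exp {u : ℝ → ℝ} (hu : Integrable u) (hue : ∀ s, u (-s) = u s) (b : ℝ) :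
    ∫ s : ℝ, Complex.exp (((b * s : ℝ) : ℂ) * Complex.I) * (u s : ℂ)
      = ((2 * ∫ s in Ioi (0:ℝ), u s * Real.cos (b * s) : ℝ) : ℂ) := by
  set F : ℝ → ℂ := fun s => Complex.exp (((b * s : ℝ) : ℂ) * Complex.I) * (u s : ℂ) with hF
  have hFmeas : AEStronglyMeasurable F volume := by
    apply AEStronglyMeasurable.mul
    · exact Continuous.aestronglyMeasurable (by fun_prop)
    · exact Complex.continuous_ofReal.comp_aestronglyMeasurable hu.1
  have hFint : Integrable F := by
    apply Integrable.mono' hu.norm hFmeas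
    filter_upwards with s
    rw [hF, norm_mul,
      Complex.norm_exp_ofReal_mul_I, one_mul, Complex.norm_real, Real.norm_eq_abs]
  have hsplit : ∫ s : ℝ, F s = (∫ s in Iic (0:ℝ), F s) + ∫ s in Ioi (0:ℝ), F s := by
    rw [← setIntegral_union (Iic_disjoint_Ioi le_rfl) measurableSet_Ioi
      hFint.integrableOn hFint.integrableOn, Iic_union_Ioi, setIntegral_univ]
  have hneg : ∫ s in Iic (0:ℝ), F s = ∫ s in Ioi (0:ℝ), F (-s) := by
    rw [integral_comp_neg_Ioi]
    norm_num
  have hcomb : ∀ s : ℝ, F (-s) + F s = ((2 * (u s * Real.cos (b * s)) : ℝ) : ℂ) := by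
    intro s
    rw [hF]
    simp only [hue s]
    rw [show ((b * -s : ℝ) : ℂ) = -((b * s : ℝ) : ℂ) by push_cast; ring]
    have h2c := Complex.two_cos (x := ((b * s : ℝ) : ℂ))
    push_cast
    push_cast at h2c
    linear_combination (-(u s : ℂ)) * h2c
  have hFneg : IntegrableOn (fun s => F (-s)) (Ioi (0:ℝ)) :=
    (hFint.comp_neg).integrableOn
  calc ∫ s : ℝ, F s = (∫ s in Ioi (0:ℝ), F (-s)) + ∫ s in Ioi (0:ℝ), F s := by
        rw [hsplit, hneg]
    _ = ∫ s in Ioi (0:ℝ), (F (-s) + F s) := (integral_add hFneg hFint.integrableOn).symm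
    _ = ∫ s in Ioi (0:ℝ), ((2 * (u s * Real.cos (b * s)) : ℝ) : ℂ) := by
        apply integral_congr_ae
        filter_upwards with s
        exact hcomb s
    _ = ((∫ s in Ioi (0:ℝ), 2 * (u s * Real.cos (b * s)) : ℝ) : ℂ) := integral_ofReal
    _ = ((2 * ∫ s in Ioi (0:ℝ), u s * Real.cos (b * s) : ℝ) : ℂ) := by
        rw [integral_const_mul]


lemma fourier_eq_cos {u : ℝ → ℝ} (hu : Integrable u) (hue : ∀ s, u (-s) = u s) (w : ℝ) :
    𝓕 (fun s : ℝ => (u s : ℂ)) w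
      = ((2 * ∫ s in Ioi (0:ℝ), u s * Real.cos (2*π*w*s) : ℝ) : ℂ) := by
  rw [Real.fourier_eq']
  have h : ∀ v : ℝ, (Complex.exp (↑(-2 * π * ⟪v, w⟫) * Complex.I) • ((u v : ℂ)))
      = Complex.exp ((((-(2*π*w)) * v : ℝ) : ℂ) * Complex.I) * (u v : ℂ) := by
    intro v
    rw [smul_eq_mul]
    congr 3
    simp only [RCLike.inner_apply, conj_trivial]
    push_cast
    ring
  simp_rw [h]
  rw [integral_even_exp hu hue (-(2*π*w))]
  congr 2
  apply integral_congr_ae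
  filter_upwards with s
  rw [show (-(2*π*w))*s = -(2*π*w*s) by ring, Real.cos_neg]

lemma fourierInv_eq_cos {u : ℝ → ℝ} (hu : Integrable u) (hue : ∀ s, u (-s) = u s) (w : ℝ) :
    𝓕⁻ (fun s : ℝ => (u s : ℂ)) w
      = ((2 * ∫ s in Ioi (0:ℝ), u s * Real.cos (2*π*w*s) : ℝ) : ℂ) := by
  rw [Real.fourierInv_eq']
  have h : ∀ v : ℝ, (Complex.exp (↑(2 * π * ⟪v, w⟫) * Complex.I) • ((u v : ℂ)))
      = Complex.exp ((((2*π*w) * v : ℝ) : ℂ) * Complex.I) * (u v : ℂ) := by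
    intro v
    rw [smul_eq_mul]
    congr 3
    simp only [RCLike.inner_apply, conj_trivial]
    push_cast
    ring
  simp_rw [h]
  rw [integral_even_exp hu hue (2*π*w)]

lemma fourier_g_eq (hx : 0 < x) :
    𝓕 (fun t : ℝ => ((Real.exp (-x * Real.cosh t) : ℝ) : ℂ))
      = fun ξ : ℝ => ((2 * Kit (2*π*ξ) x : ℝ) : ℂ) := by
  funext ξ
  rw [fourier_eq_cos (int_g_real hx) (fun s => by rw [Real.cosh_neg]) ξ]
  rw [Kit]

lemma int_kit_scaled (hx : 0 < x) :
    Integrable (fun ξ : ℝ => 2 * Kit (2*π*ξ) x) := by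
  have h1 : IntegrableOn (fun ξ : ℝ => Kit ((2*π)*ξ) x) (Ioi (0:ℝ)) := by
    have h := (integrableOn_Ioi_comp_mul_left_iff (fun τ => Kit τ x) 0
      (a := 2*π) (by positivity)).2
    rw [mul_zero] at h
    exact h (int_kit hx)
  have h2 : Integrable (fun ξ : ℝ => Kit ((2*π)*|ξ|) x) :=
    integrable_comp_abs (f := fun u => Kit ((2*π)*u) x) h1
  have h3 : Integrable (fun ξ : ℝ => Kit ((2*π)*ξ) x) := by
    apply h2.congr
    filter_upwards with ξ
    rcases le_or_gt 0 ξ with h|h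
    · rw [abs_of_nonneg h]
    · rw [abs_of_neg h, show (2*π)*(-ξ) = -((2*π)*ξ) by ring, kit_even]
  exact h3.const_mul 2

lemma int_fourier_g (hx : 0 < x) :
    Integrable (𝓕 (fun t : ℝ => ((Real.exp (-x * Real.cosh t) : ℝ) : ℂ))) := by
  rw [fourier_g_eq hx]
  exact (int_kit_scaled hx).ofReal

/-- Fourier (cosine) inversion for the Macdonald function. -/
lemma kit_inversion (hx : 0 < x) (t : ℝ) :
    ∫ τ in Ioi (0:ℝ), Kit τ x * Real.cos (τ * t) = π/2 * Real.exp (-x * Real.cosh t) := by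
  have hFc : Integrable (fun s : ℝ => ((Real.exp (-x * Real.cosh s) : ℝ) : ℂ)) :=
    (int_g_real hx).ofReal
  have hcont : Continuous (fun s : ℝ => ((Real.exp (-x * Real.cosh s) : ℝ) : ℂ)) := by
    fun_prop
  have hinv := hFc.fourierInv_fourier_eq (int_fourier_g hx) (hcont.continuousAt (x := t))
  rw [fourier_g_eq hx] at hinv
  have heven : ∀ ξ : ℝ, 2 * Kit (2*π*(-ξ)) x = 2 * Kit (2*π*ξ) x := by
    intro ξ
    rw [show 2*π*(-ξ) = -(2*π*ξ) by ring, kit_even]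
  rw [fourierInv_eq_cos (int_kit_scaled hx) heven t, Complex.ofReal_inj] at hinv
  have hcv : ∫ ξ in Ioi (0:ℝ), 2 * Kit (2*π*ξ) x * Real.cos (2*π*t*ξ)
      = (2*π)⁻¹ * ∫ τ in Ioi (0:ℝ), 2 * Kit τ x * Real.cos (τ * t) := by
    have h := integral_comp_mul_left_Ioi
      (g := fun τ => 2 * Kit τ x * Real.cos (τ * t)) 0 (b := 2*π) (by positivity)
    rw [mul_zero, smul_eq_mul] at h
    rw [← h]
    apply integral_congr_ae
    filter_upwards with ξ
    rw [show (2*π*ξ)*t = 2*π*t*ξ by ring]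
  rw [hcv] at hinv
  have h2 : ∫ τ in Ioi (0:ℝ), 2 * Kit τ x * Real.cos (τ * t)
      = 2 * ∫ τ in Ioi (0:ℝ), Kit τ x * Real.cos (τ * t) := by
    rw [← integral_const_mul]
    apply integral_congr_ae
    filter_upwards with τ
    ring
  rw [h2] at hinv
  have hπ : (π:ℝ) ≠ 0 := Real.pi_ne_zero
  field_simp at hinv ⊢
  simp_rw [mul_comm t]
  linarith


/-- Parseval-type identity via Fubini and inversion. -/
lemma parseval (hx : 0 < x) {w : ℝ → ℝ} (hwc : Continuous w) (hw : IntegrableOn w (Ioi 0)) :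
    ∫ τ in Ioi (0:ℝ), (∫ t in Ioi (0:ℝ), w t * Real.cos (τ * t)) * Kit τ x
      = π/2 * ∫ t in Ioi (0:ℝ), w t * Real.exp (-x * Real.cosh t) := by
  have hprod : Integrable (Function.uncurry fun τ t => w t * Real.cos (τ * t) * Kit τ x)
      ((volume.restrict (Ioi (0:ℝ))).prod (volume.restrict (Ioi (0:ℝ)))) := by
    apply Integrable.mono' ((int_kit hx).norm.mul_prod hw.norm)
    · apply Continuous.aestronglyMeasurable
      apply Continuous.mul
      · exact (hwc.comp continuous_snd).mul
          (Real.continuous_cos.comp (continuous_fst.mul continuous_snd))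
      · exact (continuous_kit hx).comp continuous_fst
    · filter_upwards with p
      show ‖w p.2 * Real.cos (p.1 * p.2) * Kit p.1 x‖ ≤ _
      rw [Real.norm_eq_abs, abs_mul, abs_mul]
      calc |w p.2| * |Real.cos (p.1 * p.2)| * |Kit p.1 x|
          ≤ |w p.2| * 1 * |Kit p.1 x| := by
            apply mul_le_mul_of_nonneg_right _ (abs_nonneg _)
            exact mul_le_mul_of_nonneg_left (Real.abs_cos_le_one _) (abs_nonneg _)
        _ = |Kit p.1 x| * |w p.2| := by ring
        _ = ‖Kit p.1 x‖ * ‖w p.2‖ := by rw [Real.norm_eq_abs, Real.norm_eq_abs]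
  calc ∫ τ in Ioi (0:ℝ), (∫ t in Ioi (0:ℝ), w t * Real.cos (τ * t)) * Kit τ x
      = ∫ τ in Ioi (0:ℝ), ∫ t in Ioi (0:ℝ), w t * Real.cos (τ * t) * Kit τ x := by
        apply integral_congr_ae
        filter_upwards with τ
        rw [← integral_mul_const]
    _ = ∫ t in Ioi (0:ℝ), ∫ τ in Ioi (0:ℝ), w t * Real.cos (τ * t) * Kit τ x := by
        exact integral_integral_swap hprod
    _ = ∫ t in Ioi (0:ℝ), w t * (π/2 * Real.exp (-x * Real.cosh t)) := by
        apply integral_congr_ae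
        filter_upwards with t
        rw [← kit_inversion hx t, ← integral_const_mul]
        apply integral_congr_ae
        filter_upwards with τ
        ring
    _ = π/2 * ∫ t in Ioi (0:ℝ), w t * Real.exp (-x * Real.cosh t) := by
        rw [← integral_const_mul]
        apply integral_congr_ae
        filter_upwards with t
        ring

lemma mu0_eq (hx : 0 < x) :
    μ 0 x = π/2 * ∫ t in Ioi (0:ℝ), Real.exp (-(2*x) * Real.cosh t) := by
  have h := parseval hx (w := fun t => Real.exp (-x * Real.cosh t)) (by fun_prop) (int_g hx)
  have h1 : μ 0 x = ∫ τ in Ioi (0:ℝ),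
      (∫ t in Ioi (0:ℝ), Real.exp (-x * Real.cosh t) * Real.cos (τ * t)) * Kit τ x := by
    rw [μ]
    apply integral_congr_ae
    filter_upwards with τ
    rw [show (∫ t in Ioi (0:ℝ), Real.exp (-x * Real.cosh t) * Real.cos (τ * t)) = Kit τ x from rfl]
    ring
  rw [h1, h]
  congr 1
  apply integral_congr_ae
  filter_upwards with t
  rw [← Real.exp_add]
  congr 1
  ring

lemma mu1_eq (hx : 0 < x) :
    μ 1 x = π/2 * ((x * ∫ t in Ioi (0:ℝ), Real.cosh t * Real.exp (-(2*x) * Real.cosh t))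
      - x^2 * ∫ t in Ioi (0:ℝ), Real.sinh t ^ 2 * Real.exp (-(2*x) * Real.cosh t)) := by
  have h := parseval hx
    (w := fun t => -((x^2 * Real.sinh t ^ 2 - x * Real.cosh t) * Real.exp (-x * Real.cosh t)))
    (by fun_prop) ((int_gpp hx).neg)
  have h1 : μ 1 x = ∫ τ in Ioi (0:ℝ),
      (∫ t in Ioi (0:ℝ), -((x^2 * Real.sinh t ^ 2 - x * Real.cosh t)
        * Real.exp (-x * Real.cosh t)) * Real.cos (τ * t)) * Kit τ x := by
    rw [μ]
    apply integral_congr_ae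
    filter_upwards with τ
    have h2 : (∫ t in Ioi (0:ℝ), -((x^2 * Real.sinh t ^ 2 - x * Real.cosh t)
        * Real.exp (-x * Real.cosh t)) * Real.cos (τ * t)) = τ^2 * Kit τ x := by
      have h3 := ibp_kit hx (x := x) τ
      have h4 : (∫ t in Ioi (0:ℝ), -((x^2 * Real.sinh t ^ 2 - x * Real.cosh t)
          * Real.exp (-x * Real.cosh t)) * Real.cos (τ * t))
          = -∫ t in Ioi (0:ℝ), (x^2 * Real.sinh t ^ 2 - x * Real.cosh t)
            * Real.exp (-x * Real.cosh t) * Real.cos (τ * t) := by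
        rw [← integral_neg]
        apply integral_congr_ae
        filter_upwards with t
        ring
      rw [h4, h3]
      ring
    rw [h2]
    ring_nf
  rw [h1, h]
  have h5 : ∀ t : ℝ, -((x^2 * Real.sinh t ^ 2 - x * Real.cosh t) * Real.exp (-x * Real.cosh t))
      * Real.exp (-x * Real.cosh t)
      = x * (Real.cosh t * Real.exp (-(2*x) * Real.cosh t))
        - x^2 * (Real.sinh t ^ 2 * Real.exp (-(2*x) * Real.cosh t)) := by
    intro t
    have : Real.exp (-x * Real.cosh t) * Real.exp (-x * Real.cosh t)
        = Real.exp (-(2*x) * Real.cosh t) := by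
      rw [← Real.exp_add]; congr 1; ring
    linear_combination (x * Real.cosh t - x^2 * Real.sinh t ^ 2) * this
  congr 1
  rw [integral_congr_ae (g := fun t => x * (Real.cosh t * Real.exp (-(2*x) * Real.cosh t))
    - x^2 * (Real.sinh t ^ 2 * Real.exp (-(2*x) * Real.cosh t)))
    (Filter.Eventually.of_forall fun t => h5 t)]
  have hx2 : (0:ℝ) < 2*x := by linarith
  rw [integral_sub ((int_cosh_g hx2).const_mul x) ((int_sinh_sq_g hx2).const_mul (x^2)),
    integral_const_mul, integral_const_mul]

/-- Second integration by parts: `∫ cosh e^{-2x cosh} = 2x ∫ sinh² e^{-2x cosh}`. -/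
lemma ibp2 (hx : 0 < x) :
    ∫ t in Ioi (0:ℝ), Real.cosh t * Real.exp (-(2*x) * Real.cosh t)
      = 2*x * ∫ t in Ioi (0:ℝ), Real.sinh t ^ 2 * Real.exp (-(2*x) * Real.cosh t) := by
  have hx2 : (0:ℝ) < 2*x := by linarith
  set F : ℝ → ℝ := fun t => Real.sinh t * Real.exp (-(2*x) * Real.cosh t) with hF
  have hFd : ∀ t : ℝ, HasDerivAt F
      (Real.cosh t * Real.exp (-(2*x) * Real.cosh t)
        - 2*x * (Real.sinh t ^ 2 * Real.exp (-(2*x) * Real.cosh t))) t := by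
    intro t
    have hgd : HasDerivAt (fun t => Real.exp (-(2*x) * Real.cosh t))
        (-(2*x) * Real.sinh t * Real.exp (-(2*x) * Real.cosh t)) t := by
      have := ((Real.hasDerivAt_cosh t).const_mul (-(2*x))).exp
      convert this using 1
      ring
    have := (Real.hasDerivAt_sinh t).fun_mul hgd
    exact this.congr_deriv (by ring)
  have hint1 : IntegrableOn (fun t => Real.cosh t * Real.exp (-(2*x) * Real.cosh t))
      (Ioi (0:ℝ)) := int_cosh_g hx2
  have hint2 : IntegrableOn (fun t => Real.sinh t ^2 * Real.exp (-(2*x) * Real.cosh t))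
      (Ioi (0:ℝ)) := int_sinh_sq_g hx2
  have htend : Tendsto F atTop (𝓝 0) := by
    have hb := tendsto_cosh_g_atTop hx2
    apply squeeze_zero_norm ?_ hb
    intro t
    rw [hF, Real.norm_eq_abs, abs_mul, Real.abs_exp]
    apply mul_le_mul_of_nonneg_right _ (Real.exp_pos _).le
    rw [Real.abs_sinh, ← Real.cosh_abs]
    exact (Real.sinh_lt_cosh _).le
  have key := integral_Ioi_of_hasDerivAt_of_tendsto (a := 0) (m := 0)
    (Continuous.continuousWithinAt (by unfold F; fun_prop))
    (fun t _ => hFd t) (hint1.sub (hint2.const_mul (2*x))) htend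
  have hF0 : F 0 = 0 := by simp [hF]
  rw [hF0, sub_zero, integral_sub hint1 (hint2.const_mul (2*x)), integral_const_mul] at key
  linarith

/-- Differentiation under the integral sign. -/
lemma hasDeriv_psi (hx : 0 < x) :
    HasDerivAt (fun y => ∫ t in Ioi (0:ℝ), Real.exp (-(2*y) * Real.cosh t))
      (∫ t in Ioi (0:ℝ), -2 * Real.cosh t * Real.exp (-(2*x) * Real.cosh t)) x := by
  have hx2 : (0:ℝ) < 2*x := by linarith
  have h := hasDerivAt_integral_of_dominated_loc_of_deriv_le
    (μ := volume.restrict (Ioi (0:ℝ)))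
    (F := fun y t => Real.exp (-(2*y) * Real.cosh t))
    (F' := fun y t => -2 * Real.cosh t * Real.exp (-(2*y) * Real.cosh t))
    (x₀ := x) (s := Metric.ball x (x/2)) (Metric.ball_mem_nhds _ (by positivity))
    (bound := fun t => 2 * (Real.cosh t * Real.exp (-x * Real.cosh t)))
    ?_ ?_ ?_ ?_ ?_ ?_
  · exact h.2
  · filter_upwards with y
    exact Continuous.aestronglyMeasurable (by fun_prop) |>.restrict
  · exact int_g hx2
  · exact Continuous.aestronglyMeasurable (by fun_prop) |>.restrict
  · filter_upwards with t
    intro y hy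
    have hyx : x/2 < y := by
      have := abs_lt.1 (mem_ball_iff_norm.1 hy)
      linarith [this.1]
    rw [Real.norm_eq_abs, abs_mul, abs_mul, Real.abs_exp]
    have hc := Real.cosh_pos t
    have h1 : Real.exp (-(2*y) * Real.cosh t) ≤ Real.exp (-x * Real.cosh t) := by
      rw [Real.exp_le_exp]
      nlinarith
    calc |(-2:ℝ)| * |Real.cosh t| * Real.exp (-(2*y) * Real.cosh t)
        ≤ |(-2:ℝ)| * |Real.cosh t| * Real.exp (-x * Real.cosh t) := by
          apply mul_le_mul_of_nonneg_left h1 (by positivity)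
      _ = 2 * (Real.cosh t * Real.exp (-x * Real.cosh t)) := by
          rw [abs_of_pos hc]
          norm_num
          ring
  · exact (int_cosh_g hx).const_mul 2
  · filter_upwards with t
    intro y hy
    have h2 := ((hasDerivAt_id y).const_mul (-2 * Real.cosh t)).exp
    have h3 : (fun y : ℝ => Real.exp (-(2*y) * Real.cosh t))
        = fun y : ℝ => Real.exp (-2 * Real.cosh t * y) := by
      funext z
      congr 1
      ring
    rw [h3]
    exact h2.congr_deriv (by simp only [id_eq, mul_one]; ring_nf)

lemma deriv_mu0 (hx : 0 < x) :
    deriv (μ 0) x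
      = π/2 * ∫ t in Ioi (0:ℝ), -2 * Real.cosh t * Real.exp (-(2*x) * Real.cosh t) := by
  have hev : μ 0 =ᶠ[𝓝 x]
      fun y => π/2 * ∫ t in Ioi (0:ℝ), Real.exp (-(2*y) * Real.cosh t) := by
    filter_upwards [Ioi_mem_nhds hx] with y hy
    exact mu0_eq hy
  rw [hev.deriv_eq]
  exact ((hasDeriv_psi hx).const_mul (π/2)).deriv

end KitAux

theorem x_mul_deriv_mu_zero (x : ℝ) (hx : 0 < x) :
    x * deriv (μ 0) x = -4 * μ 1 x := by
  have hC := KitAux.ibp2 hx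
  rw [KitAux.deriv_mu0 hx, KitAux.mu1_eq hx]
  have h6 : ∫ t in Set.Ioi (0:ℝ), -2 * Real.cosh t * Real.exp (-(2*x) * Real.cosh t)
      = (-2) * ∫ t in Set.Ioi (0:ℝ), Real.cosh t * Real.exp (-(2*x) * Real.cosh t) := by
    rw [← MeasureTheory.integral_const_mul]
    apply MeasureTheory.integral_congr_ae
    filter_upwards with t
    ring
  rw [h6]
  linear_combination (Real.pi * x) * hC
end
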